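/- arXiv:math/0605791 — 3 statements merged into one kernel-verified Lean document; each statement's English description precedes it below -/
import Mathlib

section
/- Let n ≥ 1, 0 < p < 1, 0 < m < 1, ι > 0, r > 0, M > 0, λ₊ ≥ 0, T₀ ≥ 0. Let b : ℝⁿ → ℝⁿ satisfy ⟨b(x), x⟩ ≤ −r|x|^{1−p} for all |x| ≥ M, and let a : ℝⁿ → (n×n symmetric positive semidefinite matrices) satisfy ⟨a(x)x, x⟩ ≤ λ₊|x|² and Tr(a(x)) ≤ T₀ for all x. Define V(x) := exp(ι|x|^m) (which is C² on {x : |x| ≥ M}). Then for every x with |x| ≥ M, ⟨b(x), ∇V(x)⟩ + (1/2) Tr( a(x) ∇²V(x) ) ≤ −ι m ( r − (1/2) λ₊ ι m |x|^{p+m−1} ) |x|^{m−1−p} V(x) + (1/2) ι m T₀ |x|^{m−2} V(x). -/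
open scoped RealInnerProductSpace

/-- The Hessian matrix of `f : ℝⁿ → ℝ` at `x`, given by the second iterated
Fréchet derivative evaluated at pairs of standard basis vectors. -/
noncomputable def hessianMatrix {n : ℕ} (f : EuclideanSpace ℝ (Fin n) → ℝ)
    (x : EuclideanSpace ℝ (Fin n)) : Matrix (Fin n) (Fin n) ℝ :=
  fun i j =>
    iteratedFDeriv ℝ 2 f x ![EuclideanSpace.single i 1, EuclideanSpace.single j 1]

section Aux

variable {n : ℕ}

noncomputable abbrev EE (n : ℕ) := EuclideanSpace ℝ (Fin n)

noncomputable def Bn (n : ℕ) : EE n →L[ℝ] EE n →L[ℝ] ℝ := innerSL ℝ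

@[simp] lemma Bn_apply (x y : EE n) : Bn n x y = ⟪x, y⟫ := rfl

lemma lemA (ι m : ℝ) {t : ℝ} (ht : 0 < t) :
    HasDerivAt (fun u : ℝ => Real.exp (ι * u ^ (m/2)))
      (ι * (m/2) * t ^ (m/2 - 1) * Real.exp (ι * t ^ (m/2))) t := by
  have h1 : HasDerivAt (fun u : ℝ => u ^ (m/2)) ((m/2) * t ^ (m/2 - 1)) t :=
    Real.hasDerivAt_rpow_const (Or.inl ht.ne')
  have h2 := (h1.const_mul ι).exp
  convert h2 using 1
  ring

lemma lemB (ι m : ℝ) {t : ℝ} (ht : 0 < t) :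
    HasDerivAt (fun u : ℝ => ι * m * u ^ (m/2 - 1) * Real.exp (ι * u ^ (m/2)))
      ((ι * m * ((m/2 - 1) * t ^ (m/2 - 2))) * Real.exp (ι * t ^ (m/2))
        + (ι * m * t ^ (m/2 - 1)) * (ι * (m/2) * t ^ (m/2 - 1) * Real.exp (ι * t ^ (m/2)))) t := by
  have h1 : HasDerivAt (fun u : ℝ => u ^ (m/2 - 1)) ((m/2 - 1) * t ^ (m/2 - 1 - 1)) t :=
    Real.hasDerivAt_rpow_const (Or.inl ht.ne')
  have h2 := (h1.const_mul (ι * m)).mul (lemA ι m ht)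
  rw [show m/2 - 1 - 1 = m/2 - 2 by ring] at h2
  exact h2

lemma lemC (ι m : ℝ) {y : EE n} (hy : y ≠ 0) :
    HasFDerivAt (fun z : EE n => Real.exp (ι * (‖z‖^2 : ℝ) ^ (m/2)))
      ((ι * m * ((‖y‖^2 : ℝ)) ^ (m/2 - 1) * Real.exp (ι * ((‖y‖^2 : ℝ)) ^ (m/2))) • innerSL ℝ y) y := by
  have hq : HasFDerivAt (fun z : EE n => (‖z‖^2 : ℝ)) (2 • innerSL ℝ y) y :=
    (hasStrictFDerivAt_norm_sq y).hasFDerivAt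
  have ht : (0:ℝ) < ‖y‖^2 := by have := norm_pos_iff.mpr hy; positivity
  have h := (lemA ι m ht).comp_hasFDerivAt y hq
  refine h.congr_fderiv ?_
  ext v
  simp [two_smul]
  ring

lemma lemD (ι m : ℝ) {x : EE n} (hx : x ≠ 0) :
    HasFDerivAt (fun y : EE n =>
        (ι * m * ((‖y‖^2 : ℝ)) ^ (m/2 - 1) * Real.exp (ι * ((‖y‖^2 : ℝ)) ^ (m/2))) • innerSL ℝ y)
      ((ι * m * ((‖x‖^2:ℝ)) ^ (m/2 - 1) * Real.exp (ι * ((‖x‖^2:ℝ)) ^ (m/2))) • (Bn n)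
        + (((ι * m * ((m/2 - 1) * ((‖x‖^2:ℝ)) ^ (m/2 - 2))) * Real.exp (ι * ((‖x‖^2:ℝ)) ^ (m/2))
        + (ι * m * ((‖x‖^2:ℝ)) ^ (m/2 - 1)) * (ι * (m/2) * ((‖x‖^2:ℝ)) ^ (m/2 - 1)
            * Real.exp (ι * ((‖x‖^2:ℝ)) ^ (m/2)))) • (2 • innerSL ℝ x)).smulRight (innerSL ℝ x)) x := by
  have hq : HasFDerivAt (fun z : EE n => (‖z‖^2 : ℝ)) (2 • innerSL ℝ x) x :=
    (hasStrictFDerivAt_norm_sq x).hasFDerivAt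
  have ht : (0:ℝ) < ‖x‖^2 := by have := norm_pos_iff.mpr hx; positivity
  have hc := (lemB ι m ht).comp_hasFDerivAt x hq
  exact hc.smul (innerSL ℝ).hasFDerivAt

lemma lemE (ι m : ℝ) {x : EE n} (hx : x ≠ 0) (u v : EE n) :
    iteratedFDeriv ℝ 2 (fun z : EE n => Real.exp (ι * (‖z‖^2 : ℝ) ^ (m/2))) x ![u, v]
      = (ι * m * ((‖x‖^2:ℝ)) ^ (m/2 - 1) * Real.exp (ι * ((‖x‖^2:ℝ)) ^ (m/2))) * ⟪u, v⟫
        + ((ι * m * ((m/2 - 1) * ((‖x‖^2:ℝ)) ^ (m/2 - 2))) * Real.exp (ι * ((‖x‖^2:ℝ)) ^ (m/2))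
          + (ι * m * ((‖x‖^2:ℝ)) ^ (m/2 - 1)) * (ι * (m/2) * ((‖x‖^2:ℝ)) ^ (m/2 - 1)
            * Real.exp (ι * ((‖x‖^2:ℝ)) ^ (m/2)))) * (2 * ⟪x, u⟫) * ⟪x, v⟫ := by
  rw [iteratedFDeriv_two_apply]
  have hev : (fun y => fderiv ℝ (fun z : EE n => Real.exp (ι * (‖z‖^2 : ℝ) ^ (m/2))) y) =ᶠ[nhds x]
      (fun y : EE n =>
        (ι * m * ((‖y‖^2 : ℝ)) ^ (m/2 - 1) * Real.exp (ι * ((‖y‖^2 : ℝ)) ^ (m/2))) • innerSL ℝ y) := by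
    filter_upwards [isOpen_compl_singleton.mem_nhds (by simpa using hx)] with y hy
    exact (lemC ι m (by simpa using hy)).fderiv
  rw [hev.fderiv_eq, (lemD ι m hx).fderiv]
  simp only [ContinuousLinearMap.add_apply, ContinuousLinearMap.coe_smul', Pi.smul_apply,
    ContinuousLinearMap.smulRight_apply, Bn_apply, innerSL_apply_apply,
    smul_eq_mul, two_smul, ContinuousLinearMap.add_apply, Matrix.cons_val_zero, Matrix.cons_val_one, Matrix.head_cons]
  ring

lemma lemG (ι m : ℝ) {x : EE n} (hx : x ≠ 0) :
    gradient (fun z : EE n => Real.exp (ι * (‖z‖^2 : ℝ) ^ (m/2))) x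
      = (ι * m * ((‖x‖^2:ℝ)) ^ (m/2 - 1) * Real.exp (ι * ((‖x‖^2:ℝ)) ^ (m/2))) • x := by
  have h : HasGradientAt (fun z : EE n => Real.exp (ι * (‖z‖^2 : ℝ) ^ (m/2)))
      ((ι * m * ((‖x‖^2:ℝ)) ^ (m/2 - 1) * Real.exp (ι * ((‖x‖^2:ℝ)) ^ (m/2))) • x) x := by
    rw [hasGradientAt_iff_hasFDerivAt]
    refine (lemC ι m hx).congr_fderiv ?_
    ext v
    simp [real_inner_smul_left]
  exact h.gradient

lemma lemT (A H : Matrix (Fin n) (Fin n) ℝ) (x : Fin n → ℝ) (c d : ℝ)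
    (hH : ∀ i j, H i j = c * (if j = i then 1 else 0) + d * (x i * x j)) :
    (A * H).trace = c * A.trace + d * dotProduct (A.mulVec x) x := by
  have h1 : ∀ i, (A * H) i i = c * A i i + d * ((∑ j, A i j * x j) * x i) := by
    intro i
    rw [Matrix.mul_apply]
    simp only [hH, mul_add, Finset.sum_add_distrib]
    congr 1
    · simp [mul_ite, Finset.sum_ite_eq', mul_comm]
    · rw [Finset.sum_mul, Finset.mul_sum]
      apply Finset.sum_congr rfl
      intro j _
      ring
  simp only [Matrix.trace, Matrix.diag, h1, Finset.sum_add_distrib, ← Finset.mul_sum,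
    dotProduct, Matrix.mulVec]

end Aux

/-- Drift inequality for the generator of an elliptic diffusion applied to the test
function `V(x) = exp(ι |x|^m)`: if `⟨b(x),x⟩ ≤ -r|x|^{1-p}` for `|x| ≥ M`,
`⟨a(x)x,x⟩ ≤ λ₊|x|²` and `Tr a(x) ≤ T₀`, then for `|x| ≥ M`,
`⟨b(x),∇V(x)⟩ + (1/2)Tr(a(x)∇²V(x))
  ≤ -ιm (r - (1/2)λ₊ιm|x|^{p+m-1}) |x|^{m-1-p} V(x) + (1/2)ιm T₀ |x|^{m-2} V(x)`. -/
theorem elliptic_diffusion_subexponential_drift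
    (n : ℕ) (hn : 1 ≤ n) (p m ι r M lam T₀ : ℝ)
    (hp : 0 < p) (hp1 : p < 1) (hm : 0 < m) (hm1 : m < 1)
    (hι : 0 < ι) (hr : 0 < r) (hM : 0 < M) (hlam : 0 ≤ lam) (hT₀ : 0 ≤ T₀)
    (b : EuclideanSpace ℝ (Fin n) → EuclideanSpace ℝ (Fin n))
    (a : EuclideanSpace ℝ (Fin n) → Matrix (Fin n) (Fin n) ℝ)
    (ha_symm : ∀ x, (a x).IsSymm)
    (ha_psd : ∀ x, (a x).PosSemidef)
    (ha_quad : ∀ x : EuclideanSpace ℝ (Fin n),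
      dotProduct ((a x).mulVec (fun i => x i)) (fun i => x i) ≤ lam * ‖x‖ ^ 2)
    (ha_tr : ∀ x, (a x).trace ≤ T₀)
    (hb : ∀ x : EuclideanSpace ℝ (Fin n), M ≤ ‖x‖ → ⟪b x, x⟫ ≤ -r * ‖x‖ ^ (1 - p))
    (V : EuclideanSpace ℝ (Fin n) → ℝ)
    (hV : ∀ x : EuclideanSpace ℝ (Fin n), V x = Real.exp (ι * ‖x‖ ^ m)) :
    ∀ x : EuclideanSpace ℝ (Fin n), M ≤ ‖x‖ →
      ⟪b x, gradient V x⟫ + (1/2) * (a x * hessianMatrix V x).trace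
        ≤ -(ι * m) * (r - (1/2) * lam * ι * m * ‖x‖ ^ (p + m - 1))
              * ‖x‖ ^ (m - 1 - p) * V x
          + (1/2) * ι * m * T₀ * ‖x‖ ^ (m - 2) * V x := by
  have hVfun : V = fun z : EE n => Real.exp (ι * (‖z‖^2 : ℝ) ^ (m/2)) := by
    funext y
    rw [hV y]
    have : ‖y‖ ^ m = (‖y‖^2 : ℝ) ^ (m/2) := by
      rw [← Real.rpow_natCast ‖y‖ 2, ← Real.rpow_mul (norm_nonneg y)]
      congr 1
      push_cast
      ring
    rw [this]
  intro x hx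
  have hs : (0:ℝ) < ‖x‖ := lt_of_lt_of_le hM hx
  have hx0 : x ≠ 0 := by
    intro h; rw [h, norm_zero] at hs; exact lt_irrefl 0 hs
  have hpow : ∀ e : ℝ, ((‖x‖^2 : ℝ)) ^ e = ‖x‖ ^ (2*e) := by
    intro e
    rw [← Real.rpow_natCast ‖x‖ 2, ← Real.rpow_mul (norm_nonneg x)]
    norm_num
  set Vx := Real.exp (ι * ‖x‖ ^ m) with hVx
  have hVxpos : 0 < Vx := Real.exp_pos _
  have hVval : V x = Vx := hV x
  have hexp : Real.exp (ι * ((‖x‖^2:ℝ)) ^ (m/2)) = Vx := by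
    rw [hpow, show 2*(m/2) = m by ring]
  -- the coefficients
  set cc : ℝ := ι * m * ‖x‖ ^ (m-2) * Vx with hcc
  set dd2 : ℝ := ι^2 * m^2 * ‖x‖ ^ (2*m-4) * Vx with hdd2
  set dd1 : ℝ := ι * m * (m-2) * ‖x‖ ^ (m-4) * Vx with hdd1
  have hccpos : 0 < cc := by
    have : (0:ℝ) < ‖x‖ ^ (m-2) := Real.rpow_pos_of_pos hs _
    positivity
  have hdd2nn : 0 ≤ dd2 := by
    have : (0:ℝ) < ‖x‖ ^ (2*m-4) := Real.rpow_pos_of_pos hs _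
    positivity
  have hdd1np : dd1 ≤ 0 := by
    have h1 : (0:ℝ) < ‖x‖ ^ (m-4) := Real.rpow_pos_of_pos hs _
    have h2 : ι * m * (m-2) < 0 := by nlinarith [mul_pos hι hm]
    rw [hdd1]
    exact mul_nonpos_of_nonpos_of_nonneg
      (mul_nonpos_of_nonpos_of_nonneg h2.le h1.le) hVxpos.le
  -- rpow product identities
  have e1 : ‖x‖ ^ (m-2) * ‖x‖ ^ (1-p) = ‖x‖ ^ (m-1-p) := by
    rw [← Real.rpow_add hs]; congr 1; ring
  have e2 : ‖x‖ ^ (p+m-1) * ‖x‖ ^ (m-1-p) = ‖x‖ ^ (2*m-4) * ‖x‖ ^ 2 := by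
    rw [← Real.rpow_natCast ‖x‖ 2, ← Real.rpow_add hs, ← Real.rpow_add hs]
    congr 1; push_cast; ring
  have e3 : ‖x‖ ^ (m-2) * ‖x‖ ^ (m-2) = ‖x‖ ^ (2*m-4) := by
    rw [← Real.rpow_add hs]; congr 1; ring
  have e4 : ‖x‖ ^ (m-2) = ((‖x‖^2 : ℝ)) ^ (m/2 - 1) := by
    rw [hpow, show 2*(m/2-1) = m-2 by ring]
  have e5 : ‖x‖ ^ (m-4) = ((‖x‖^2 : ℝ)) ^ (m/2 - 2) := by
    rw [hpow, show 2*(m/2-2) = m-4 by ring]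
  -- gradient term
  have hgrad : gradient V x = (ι * m * ‖x‖ ^ (m-2) * Vx) • x := by
    rw [hVfun, lemG ι m hx0, ← e4, hexp]
  have step1 : ⟪b x, gradient V x⟫ ≤ -(ι * m * r) * ‖x‖ ^ (m-1-p) * Vx := by
    rw [hgrad, real_inner_smul_right]
    have h1 : (ι * m * ‖x‖ ^ (m-2) * Vx) * ⟪b x, x⟫
        ≤ (ι * m * ‖x‖ ^ (m-2) * Vx) * (-r * ‖x‖ ^ (1-p)) := by
      apply mul_le_mul_of_nonneg_left (hb x hx)
      positivity
    refine h1.trans_eq ?_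
    linear_combination (-(ι * m * r * Vx)) * e1
  -- Hessian entries
  have hH : ∀ i j, hessianMatrix V x i j
      = cc * (if j = i then 1 else 0) + (dd1 + dd2) * (x i * x j) := by
    intro i j
    show iteratedFDeriv ℝ 2 V x ![EuclideanSpace.single i 1, EuclideanSpace.single j 1] = _
    rw [hVfun, lemE ι m hx0]
    rw [← e4, ← e5, hexp]
    simp only [EuclideanSpace.inner_single_left, EuclideanSpace.inner_single_right,
      EuclideanSpace.single_apply, map_one, one_mul, mul_one, starRingEnd_apply, star_trivial]
    rw [hcc, hdd1, hdd2]
    rcases eq_or_ne j i with h | h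
    · subst h
      simp only [if_pos rfl]
      linear_combination (ι^2 * m^2 * Vx * (x j * x j)) * e3
    · simp only [if_neg h]
      linear_combination (ι^2 * m^2 * Vx * (x i * x j)) * e3
  -- trace
  have htr : (a x * hessianMatrix V x).trace
      = cc * (a x).trace
        + (dd1 + dd2) * dotProduct ((a x).mulVec (fun i => x i)) (fun i => x i) :=
    lemT (a x) _ (fun i => x i) cc (dd1 + dd2) hH
  set Q : ℝ := dotProduct ((a x).mulVec (fun i => x i)) (fun i => x i) with hQ
  have hQ0 : 0 ≤ Q := by
    have h := (ha_psd x).dotProduct_mulVec_nonneg (fun i => x i)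
    rw [hQ, dotProduct_comm]
    simpa using h
  have hQle : Q ≤ lam * ‖x‖ ^ 2 := ha_quad x
  have step2 : (1/2 : ℝ) * (a x * hessianMatrix V x).trace
      ≤ (1/2) * (cc * T₀ + dd2 * (lam * ‖x‖ ^ 2)) := by
    rw [htr]
    have h1 : cc * (a x).trace ≤ cc * T₀ :=
      mul_le_mul_of_nonneg_left (ha_tr x) hccpos.le
    have h2 : (dd1 + dd2) * Q ≤ dd2 * (lam * ‖x‖ ^ 2) := by
      have h3 : dd1 * Q ≤ 0 := mul_nonpos_of_nonpos_of_nonneg hdd1np hQ0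
      have h4 : dd2 * Q ≤ dd2 * (lam * ‖x‖ ^ 2) := mul_le_mul_of_nonneg_left hQle hdd2nn
      nlinarith
    linarith
  have heq : -(ι * m * r) * ‖x‖ ^ (m-1-p) * Vx + (1/2) * (cc * T₀ + dd2 * (lam * ‖x‖ ^ 2))
      = -(ι * m) * (r - (1/2) * lam * ι * m * ‖x‖ ^ (p + m - 1)) * ‖x‖ ^ (m - 1 - p) * V x
          + (1/2) * ι * m * T₀ * ‖x‖ ^ (m - 2) * V x := by
    rw [hVval, hcc, hdd2]
    linear_combination (-(1/2) * lam * ι^2 * m^2 * Vx) * e2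
  calc ⟪b x, gradient V x⟫ + (1/2) * (a x * hessianMatrix V x).trace
      ≤ -(ι * m * r) * ‖x‖ ^ (m-1-p) * Vx + (1/2) * (cc * T₀ + dd2 * (lam * ‖x‖ ^ 2)) :=
        add_le_add step1 step2
    _ = _ := heq
end

section
/- Let σ > 0, c > 0, α > 0, β > 0, 0 < p < 1 and 1 − p < m ≤ 1. Let U : ℝ → ℝ be continuously differentiable and bounded below, and suppose there are constants a₀, b₀ > 0 and M ≥ 1 such that a₀|x|^{p−1} ≤ sgn(x)·U'(x) ≤ b₀|x|^{p−1} for all |x| ≥ M. Let G : ℝ → ℝ be twice continuously differentiable with G'(x) = sgn(x)|x|^m for |x| ≥ M and β·sup_{x∈ℝ} G''(x) < cα. Define W(x,y) := α(y²/2 + U(x)) + β(G'(x)y + cG(x)) and assume inf_{(x,y)∈ℝ²} W(x,y) ≥ 1. Define 𝒜W(x,y) := (1/2)σ² ∂²_{yy}W(x,y) + y ∂_x W(x,y) − (cy + U'(x)) ∂_y W(x,y). Then there exist constants K < ∞ and L > 0 such that for all (x,y) ∈ ℝ², 𝒜W(x,y) ≤ K − L · W(x,y)^{(p−1+m)/(m+1)}.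 -/
lemma aux_sub_le {f g f' g' : ℝ → ℝ} {M x : ℝ}
    (hf : ∀ t, M ≤ t → HasDerivAt f (f' t) t)
    (hg : ∀ t, M ≤ t → HasDerivAt g (g' t) t)
    (hle : ∀ t, M < t → f' t ≤ g' t) (hx : M ≤ x) :
    f x - g x ≤ f M - g M := by
  have h : AntitoneOn (fun t => f t - g t) (Set.Ici M) := by
    apply antitoneOn_of_deriv_nonpos (convex_Ici M)
    · intro t ht
      exact ((hf t ht).sub (hg t ht)).continuousAt.continuousWithinAt
    · intro t ht
      rw [interior_Ici] at ht
      exact ((hf t ht.le).sub (hg t ht.le)).differentiableAt.differentiableWithinAt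
    · intro t ht
      rw [interior_Ici] at ht
      rw [show deriv (fun t => f t - g t) t = f' t - g' t from ((hf t ht.le).sub (hg t ht.le)).deriv]
      exact sub_nonpos.mpr (hle t ht)
  exact h (show M ∈ Set.Ici M from le_refl M) hx hx

lemma aux_rpow_le_one_add {a e f : ℝ} (ha : 0 ≤ a) (he : 0 ≤ e) (hef : e ≤ f) :
    a ^ e ≤ 1 + a ^ f := by
  rcases le_total a 1 with h | h
  · have h1 : a ^ e ≤ 1 := Real.rpow_le_one ha h he
    have h2 : (0:ℝ) ≤ a ^ f := Real.rpow_nonneg ha f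
    linarith
  · have : a ^ e ≤ a ^ f := Real.rpow_le_rpow_of_exponent_le h hef
    linarith

lemma aux_rpow_add_le {a b θ : ℝ} (ha : 0 ≤ a) (hb : 0 ≤ b) (h0 : 0 ≤ θ) (h1 : θ ≤ 1) :
    (a + b) ^ θ ≤ a ^ θ + b ^ θ := by
  lift a to NNReal using ha
  lift b to NNReal using hb
  rw [← NNReal.coe_add, ← NNReal.coe_rpow, ← NNReal.coe_rpow, ← NNReal.coe_rpow,
    ← NNReal.coe_add, NNReal.coe_le_coe]
  exact NNReal.rpow_add_le_add_rpow a b h0 h1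

set_option maxHeartbeats 1000000 in
/-- Polynomial drift condition for the one-dimensional stochastic damping Hamiltonian
system `dX = Y dt`, `dY = σ dB - (cY + U'(X))dt`: for the Lyapunov function
`W(x,y) = α(y²/2 + U(x)) + β(G'(x)y + cG(x))` one has
`𝒜W(x,y) ≤ K - L·W(x,y)^{(p-1+m)/(m+1)}` for some `K < ∞`, `L > 0`. -/
theorem damping_hamiltonian_polynomial_drift
    (σ c α β p m : ℝ)
    (hσ : 0 < σ) (hc : 0 < c) (hα : 0 < α) (hβ : 0 < β)
    (hp : 0 < p) (hp1 : p < 1) (hm_lb : 1 - p < m) (hm_ub : m ≤ 1)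
    (U : ℝ → ℝ) (hU_smooth : ContDiff ℝ 1 U) (hU_bdd : BddBelow (Set.range U))
    (a₀ b₀ M : ℝ) (ha₀ : 0 < a₀) (hb₀ : 0 < b₀) (hM : 1 ≤ M)
    (hU' : ∀ x : ℝ, M ≤ |x| →
      a₀ * |x| ^ (p - 1) ≤ Real.sign x * deriv U x ∧
      Real.sign x * deriv U x ≤ b₀ * |x| ^ (p - 1))
    (G : ℝ → ℝ) (hG_smooth : ContDiff ℝ 2 G)
    (hG' : ∀ x : ℝ, M ≤ |x| → deriv G x = Real.sign x * |x| ^ m)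
    (hG''_bdd : BddAbove (Set.range (fun x => deriv (deriv G) x)))
    (hG''_sup : β * sSup (Set.range (fun x => deriv (deriv G) x)) < c * α)
    (W : ℝ → ℝ → ℝ)
    (hW_def : ∀ x y : ℝ,
      W x y = α * (y ^ 2 / 2 + U x) + β * (deriv G x * y + c * G x))
    (hW_one : ∀ x y : ℝ, 1 ≤ W x y)
    (AW : ℝ → ℝ → ℝ)
    (hAW_def : ∀ x y : ℝ, AW x y =
      (1/2) * σ ^ 2 * deriv (fun y' => deriv (fun y'' => W x y'') y') y
        + y * deriv (fun x' => W x' y) x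
        - (c * y + deriv U x) * deriv (fun y' => W x y') y) :
    ∃ K L : ℝ, 0 < L ∧
      ∀ x y : ℝ, AW x y ≤ K - L * W x y ^ ((p - 1 + m) / (m + 1)) := by
  have hM0 : (0:ℝ) < M := lt_of_lt_of_le one_pos hM
  have hm0 : 0 < m := by linarith
  have hm1 : (0:ℝ) < m + 1 := by linarith
  obtain ⟨q, hq_def⟩ : ∃ q : ℝ, q = p - 1 + m := ⟨_, rfl⟩
  obtain ⟨θ, hθ_def⟩ : ∃ θ : ℝ, θ = q / (m + 1) := ⟨_, rfl⟩
  have hq : 0 < q := by rw [hq_def]; linarith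
  have hθ0 : 0 < θ := by rw [hθ_def]; exact div_pos hq hm1
  have hθ1 : θ ≤ 1 := by
    rw [hθ_def, div_le_one hm1, hq_def]; linarith
  -- differentiability facts
  have hUdiff : Differentiable ℝ U := hU_smooth.differentiable one_ne_zero
  have hGdiff : Differentiable ℝ G := hG_smooth.differentiable two_ne_zero
  have hG1 : ContDiff ℝ 1 (deriv G) :=
    (contDiff_succ_iff_deriv.mp (by exact_mod_cast hG_smooth : ContDiff ℝ ((1:ℕ∞) + 1) G)).2.2
  have hgdiff : Differentiable ℝ (deriv G) := hG1.differentiable one_ne_zero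
  have hgcont : Continuous (deriv G) := hG1.continuous
  have hu'cont : Continuous (deriv U) := hU_smooth.continuous_deriv le_rfl
  -- first y-derivative of W
  have hW_y : ∀ x y : ℝ, HasDerivAt (fun y' => W x y') (α * y + β * deriv G x) y := by
    intro x y
    have h : HasDerivAt (fun y' : ℝ => α * (y' ^ 2 / 2 + U x) + β * (deriv G x * y' + c * G x))
        (α * ((2:ℕ) * y ^ (2 - 1) / 2) + β * (deriv G x * 1)) y := by
      exact ((((hasDerivAt_pow 2 y).div_const 2).add_const (U x)).const_mul α).add
        ((((hasDerivAt_id y).const_mul (deriv G x)).add_const (c * G x)).const_mul β)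
    have h2 : α * ((2:ℕ) * y ^ (2 - 1) / 2) + β * (deriv G x * 1) = α * y + β * deriv G x := by
      push_cast; ring
    rw [h2] at h
    simpa only [hW_def] using h
  have hderiv_y : ∀ x y : ℝ, deriv (fun y' => W x y') y = α * y + β * deriv G x :=
    fun x y => (hW_y x y).deriv
  -- second y-derivative
  have hderiv_yy : ∀ x y : ℝ, deriv (fun y' => deriv (fun y'' => W x y'') y') y = α := by
    intro x y
    have hfun : (fun y' => deriv (fun y'' => W x y'') y') = fun y' => α * y' + β * deriv G x :=
      funext fun y' => hderiv_y x y'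
    rw [hfun]
    have h : HasDerivAt (fun y' : ℝ => α * y' + β * deriv G x) (α * 1) y :=
      ((hasDerivAt_id y).const_mul α).add_const _
    rw [mul_one] at h
    exact h.deriv
  -- x-derivative
  have hW_x : ∀ x y : ℝ, HasDerivAt (fun x' => W x' y)
      (α * deriv U x + β * (deriv (deriv G) x * y + c * deriv G x)) x := by
    intro x y
    have hU1 : HasDerivAt (fun x' => y ^ 2 / 2 + U x') (deriv U x) x :=
      ((hUdiff x).hasDerivAt).const_add _
    have hg1 : HasDerivAt (fun x' => deriv G x' * y + c * G x')
        (deriv (deriv G) x * y + c * deriv G x) x :=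
      (((hgdiff x).hasDerivAt).mul_const y).add (((hGdiff x).hasDerivAt).const_mul c)
    have h := (hU1.const_mul α).add (hg1.const_mul β)
    simp only [hW_def]; exact h
  -- closed form of AW
  have hAW : ∀ x y : ℝ, AW x y = α * σ ^ 2 / 2
      + (β * deriv (deriv G) x - c * α) * y ^ 2 - β * (deriv G x * deriv U x) := by
    intro x y
    rw [hAW_def, hderiv_yy, (hW_x x y).deriv, hderiv_y]
    ring
  -- spectral gap δ
  obtain ⟨s, hs_def⟩ : ∃ s : ℝ, s = sSup (Set.range (fun x => deriv (deriv G) x)) := ⟨_, rfl⟩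
  obtain ⟨δ, hδ_def⟩ : ∃ δ : ℝ, δ = c * α - β * s := ⟨_, rfl⟩
  have hδ : 0 < δ := by
    rw [hδ_def, hs_def]; exact sub_pos.mpr hG''_sup
  have hG''le : ∀ x : ℝ, β * deriv (deriv G) x ≤ β * s := by
    intro x
    rw [hs_def]
    exact mul_le_mul_of_nonneg_left (le_csSup hG''_bdd (Set.mem_range_self x)) hβ.le
  -- compact bounds
  obtain ⟨C₀, hC₀⟩ := (isCompact_Icc (a := -M) (b := M)).exists_bound_of_continuousOn
    ((hgcont.mul hu'cont).continuousOn)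
  obtain ⟨CU, hCU⟩ := (isCompact_Icc (a := -M) (b := M)).exists_bound_of_continuousOn
    (hU_smooth.continuous.continuousOn)
  obtain ⟨CG, hCG⟩ := (isCompact_Icc (a := -M) (b := M)).exists_bound_of_continuousOn
    (hG_smooth.continuous.continuousOn)
  obtain ⟨Cg, hCg⟩ := (isCompact_Icc (a := -M) (b := M)).exists_bound_of_continuousOn
    (hgcont.continuousOn)
  have h0mem : (0:ℝ) ∈ Set.Icc (-M) M := ⟨by linarith, by linarith⟩
  have hC₀0 : 0 ≤ C₀ := le_trans (norm_nonneg _) (hC₀ 0 h0mem)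
  have hCg0 : 0 ≤ Cg := le_trans (norm_nonneg _) (hCg 0 h0mem)
  -- product lower bound for |x| ≥ M
  have hsign : ∀ x : ℝ, M ≤ |x| → a₀ * |x| ^ q ≤ deriv G x * deriv U x := by
    intro x hx
    have h1 := (hU' x hx).1
    have h2 : deriv G x * deriv U x = |x| ^ m * (Real.sign x * deriv U x) := by
      rw [hG' x hx]; ring
    have h3 : (0:ℝ) ≤ |x| ^ m := Real.rpow_nonneg (abs_nonneg x) m
    have h4 : |x| ^ m * (a₀ * |x| ^ (p - 1)) ≤ |x| ^ m * (Real.sign x * deriv U x) :=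
      mul_le_mul_of_nonneg_left h1 h3
    have hx0 : (0:ℝ) < |x| := by linarith
    have h5 : |x| ^ m * (a₀ * |x| ^ (p - 1)) = a₀ * |x| ^ q := by
      rw [hq_def, Real.rpow_add hx0]; ring
    rw [h2, ← h5]; exact h4
  -- global drift bound
  obtain ⟨K₁, hK₁_def⟩ : ∃ K₁ : ℝ, K₁ = α * σ ^ 2 / 2 + β * C₀ + β * a₀ * M ^ q := ⟨_, rfl⟩
  have hAW_bound : ∀ x y : ℝ, AW x y ≤ K₁ - δ * y ^ 2 - β * a₀ * |x| ^ q := by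
    intro x y
    rw [hAW x y, hK₁_def]
    have hy2 : (0:ℝ) ≤ y ^ 2 := sq_nonneg y
    have hcoef : (β * deriv (deriv G) x - c * α) * y ^ 2 ≤ -δ * y ^ 2 := by
      apply mul_le_mul_of_nonneg_right _ hy2
      have := hG''le x
      rw [hδ_def]; linarith
    have hMq0 : (0:ℝ) ≤ M ^ q := Real.rpow_nonneg hM0.le q
    rcases le_or_gt M |x| with hx | hx
    · have h1 := hsign x hx
      have h2 : β * (a₀ * |x| ^ q) ≤ β * (deriv G x * deriv U x) :=
        mul_le_mul_of_nonneg_left h1 hβ.le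
      linarith [hcoef, h2, mul_nonneg hβ.le hC₀0,
        mul_nonneg (mul_nonneg hβ.le ha₀.le) hMq0]
    · have hxI : x ∈ Set.Icc (-M) M := by
        constructor <;> [linarith [neg_abs_le x]; linarith [le_abs_self x]]
      have h1 := hC₀ x hxI
      rw [Real.norm_eq_abs] at h1
      have h2 : β * (-C₀) ≤ β * (deriv G x * deriv U x) :=
        mul_le_mul_of_nonneg_left (abs_le.mp h1).1 hβ.le
      have hMq : |x| ^ q ≤ M ^ q := Real.rpow_le_rpow (abs_nonneg x) hx.le hq.le
      have h3 := mul_le_mul_of_nonneg_left hMq (mul_nonneg hβ.le ha₀.le)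
      linarith [hcoef, h2, h3]
  have hb₀p : (0:ℝ) ≤ b₀/p := by positivity
  -- upper bound on U
  have hU_up : ∃ CU' : ℝ, 0 ≤ CU' ∧ ∀ x : ℝ, U x ≤ CU' + (b₀ / p) * |x| ^ p := by
    refine ⟨max 0 (max CU (max (U M - (b₀/p) * M ^ p) (U (-M) - (b₀/p) * M ^ p))),
      le_max_left _ _, fun x => ?_⟩
    have hub : ∀ t : ℝ, M < t → deriv U t ≤ b₀ / p * (p * t ^ (p - 1)) := by
      intro t ht
      have ht0 : 0 < t := lt_trans hM0 ht
      have habs : |t| = t := abs_of_pos ht0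
      have h := (hU' t (by rw [habs]; exact ht.le)).2
      rw [Real.sign_of_pos ht0, one_mul, habs] at h
      have he : b₀ / p * (p * t ^ (p - 1)) = b₀ * t ^ (p - 1) := by
        field_simp
      rw [he]; exact h
    rcases le_or_gt M x with hx | hx
    · have key := aux_sub_le (f := U) (g := fun t => (b₀/p) * t ^ p)
        (f' := deriv U) (g' := fun t => (b₀/p) * (p * t ^ (p - 1)))
        (fun t _ => (hUdiff t).hasDerivAt)
        (fun t ht => (Real.hasDerivAt_rpow_const
          (Or.inl (ne_of_gt (lt_of_lt_of_le hM0 ht)))).const_mul (b₀/p))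
        hub hx
      have habs : |x| = x := abs_of_pos (lt_of_lt_of_le hM0 hx)
      have hxp : (0:ℝ) ≤ (b₀/p) * x ^ p :=
        mul_nonneg hb₀p (Real.rpow_nonneg (by linarith) p)
      have hMp : (0:ℝ) ≤ (b₀/p) * M ^ p :=
        mul_nonneg hb₀p (Real.rpow_nonneg hM0.le p)
      have hle2 : U M - (b₀/p) * M ^ p ≤ max 0 (max CU (max (U M - (b₀/p) * M ^ p)
          (U (-M) - (b₀/p) * M ^ p))) :=
        le_max_of_le_right (le_max_of_le_right (le_max_left _ _))
      rw [habs]; linarith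
    rcases le_or_gt x (-M) with hx2 | hx2
    · have hneg : ∀ t : ℝ, M ≤ t → HasDerivAt (fun t' => U (-t')) (deriv U (-t) * (-1)) t := by
        intro t _
        exact ((hUdiff (-t)).hasDerivAt).comp t (hasDerivAt_neg t)
      have hub2 : ∀ t : ℝ, M < t → deriv U (-t) * (-1) ≤ b₀ / p * (p * t ^ (p - 1)) := by
        intro t ht
        have ht0 : 0 < t := lt_trans hM0 ht
        have habs : |(-t)| = t := by rw [abs_neg, abs_of_pos ht0]
        have h2 := (hU' (-t) (by rw [habs]; exact ht.le)).2
        rw [Real.sign_of_neg (by linarith : (-t:ℝ) < 0), habs] at h2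
        have he : b₀ / p * (p * t ^ (p - 1)) = b₀ * t ^ (p - 1) := by
          field_simp
        rw [he]; linarith
      have key := aux_sub_le (f := fun t => U (-t)) (g := fun t => (b₀/p) * t ^ p)
        (f' := fun t => deriv U (-t) * (-1)) (g' := fun t => (b₀/p) * (p * t ^ (p - 1)))
        hneg
        (fun t ht => (Real.hasDerivAt_rpow_const
          (Or.inl (ne_of_gt (lt_of_lt_of_le hM0 ht)))).const_mul (b₀/p))
        hub2 (by linarith : M ≤ -x)
      simp only [neg_neg] at key
      have habs : |x| = -x := abs_of_neg (by linarith)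
      have hxp : (0:ℝ) ≤ (b₀/p) * (-x) ^ p :=
        mul_nonneg hb₀p (Real.rpow_nonneg (by linarith) p)
      have hMp : (0:ℝ) ≤ (b₀/p) * M ^ p :=
        mul_nonneg hb₀p (Real.rpow_nonneg hM0.le p)
      have hle2 : U (-M) - (b₀/p) * M ^ p ≤ max 0 (max CU (max (U M - (b₀/p) * M ^ p)
          (U (-M) - (b₀/p) * M ^ p))) :=
        le_max_of_le_right (le_max_of_le_right (le_max_right _ _))
      rw [habs]; linarith
    · have hxI : x ∈ Set.Icc (-M) M := ⟨by linarith, by linarith⟩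
      have h1 := hCU x hxI
      rw [Real.norm_eq_abs] at h1
      have hxp : (0:ℝ) ≤ (b₀/p) * |x| ^ p :=
        mul_nonneg hb₀p (Real.rpow_nonneg (abs_nonneg x) p)
      have hle2 : CU ≤ max 0 (max CU (max (U M - (b₀/p) * M ^ p)
          (U (-M) - (b₀/p) * M ^ p))) := le_max_of_le_right (le_max_left _ _)
      linarith [(abs_le.mp h1).2]
  -- upper bound on G
  have hG_up : ∃ CG' : ℝ, 0 ≤ CG' ∧ ∀ x : ℝ, G x ≤ CG' + |x| ^ (m + 1) := by
    have hdiv : ∀ t : ℝ, 0 ≤ t → t ^ (m+1) / (m+1) ≤ t ^ (m+1) := by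
      intro t ht
      have h1 : (0:ℝ) ≤ t ^ (m+1) := Real.rpow_nonneg ht _
      rw [div_le_iff₀ hm1]
      linarith [mul_nonneg h1 hm0.le]
    have he2 : ∀ t : ℝ, 0 < t → (m+1) * t ^ ((m+1) - 1) / (m+1) = t ^ m := by
      intro t _
      have e0 : t ^ ((m+1) - 1) = t ^ m := by norm_num
      rw [e0, mul_comm, mul_div_assoc, div_self hm1.ne', mul_one]
    refine ⟨max 0 (max CG (max (G M - M ^ (m+1) / (m+1)) (G (-M) - M ^ (m+1) / (m+1)))),
      le_max_left _ _, fun x => ?_⟩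
    have hgderiv : ∀ t : ℝ, M ≤ t → HasDerivAt (fun t' => t' ^ (m+1) / (m+1))
        ((m+1) * t ^ ((m+1) - 1) / (m+1)) t := by
      intro t ht
      exact (Real.hasDerivAt_rpow_const
        (Or.inl (ne_of_gt (lt_of_lt_of_le hM0 ht)))).div_const (m+1)
    have hMdiv : (0:ℝ) ≤ M ^ (m+1) / (m+1) :=
      div_nonneg (Real.rpow_nonneg hM0.le _) hm1.le
    rcases le_or_gt M x with hx | hx
    · have hub : ∀ t : ℝ, M < t → deriv G t ≤ (m+1) * t ^ ((m+1) - 1) / (m+1) := by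
        intro t ht
        have ht0 : 0 < t := lt_trans hM0 ht
        have habs : |t| = t := abs_of_pos ht0
        rw [hG' t (by rw [habs]; exact ht.le), Real.sign_of_pos ht0, one_mul, habs,
          he2 t ht0]
      have key := aux_sub_le (f := G) (g := fun t => t ^ (m+1) / (m+1))
        (f' := deriv G) (g' := fun t => (m+1) * t ^ ((m+1) - 1) / (m+1))
        (fun t _ => (hGdiff t).hasDerivAt) hgderiv hub hx
      have habs : |x| = x := abs_of_pos (lt_of_lt_of_le hM0 hx)
      have h1 := hdiv x (le_trans hM0.le hx)
      have hle2 : G M - M ^ (m+1) / (m+1) ≤ max 0 (max CG (max (G M - M ^ (m+1) / (m+1))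
          (G (-M) - M ^ (m+1) / (m+1)))) :=
        le_max_of_le_right (le_max_of_le_right (le_max_left _ _))
      rw [habs]; linarith
    rcases le_or_gt x (-M) with hx2 | hx2
    · have hneg : ∀ t : ℝ, M ≤ t → HasDerivAt (fun t' => G (-t')) (deriv G (-t) * (-1)) t := by
        intro t _
        exact ((hGdiff (-t)).hasDerivAt).comp t (hasDerivAt_neg t)
      have hub2 : ∀ t : ℝ, M < t → deriv G (-t) * (-1) ≤ (m+1) * t ^ ((m+1) - 1) / (m+1) := by
        intro t ht
        have ht0 : 0 < t := lt_trans hM0 ht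
        have habs : |(-t)| = t := by rw [abs_neg, abs_of_pos ht0]
        have e1 : deriv G (-t) * (-1) = t ^ m := by
          rw [hG' (-t) (by rw [habs]; exact ht.le),
            Real.sign_of_neg (by linarith : (-t:ℝ) < 0), habs]
          ring
        rw [e1, he2 t ht0]
      have key := aux_sub_le (f := fun t => G (-t)) (g := fun t => t ^ (m+1) / (m+1))
        (f' := fun t => deriv G (-t) * (-1)) (g' := fun t => (m+1) * t ^ ((m+1) - 1) / (m+1))
        hneg hgderiv hub2 (by linarith : M ≤ -x)
      simp only [neg_neg] at key
      have habs : |x| = -x := abs_of_neg (by linarith)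
      have h1 := hdiv (-x) (by linarith)
      have hle2 : G (-M) - M ^ (m+1) / (m+1) ≤ max 0 (max CG (max (G M - M ^ (m+1) / (m+1))
          (G (-M) - M ^ (m+1) / (m+1)))) :=
        le_max_of_le_right (le_max_of_le_right (le_max_right _ _))
      rw [habs]; linarith
    · have hxI : x ∈ Set.Icc (-M) M := ⟨by linarith, by linarith⟩
      have h1 := hCG x hxI
      rw [Real.norm_eq_abs] at h1
      have hxp : (0:ℝ) ≤ |x| ^ (m+1) := Real.rpow_nonneg (abs_nonneg x) _
      have hle2 : CG ≤ max 0 (max CG (max (G M - M ^ (m+1) / (m+1))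
          (G (-M) - M ^ (m+1) / (m+1)))) := le_max_of_le_right (le_max_left _ _)
      linarith [(abs_le.mp h1).2]
  -- bound on |G'|
  have hg_up : ∀ x : ℝ, |deriv G x| ≤ Cg + |x| ^ m := by
    intro x
    rcases le_or_gt M |x| with hx | hx
    · have hx0 : x ≠ 0 := by
        intro h; rw [h, abs_zero] at hx; linarith
      have habs : |Real.sign x| = 1 := by
        rcases lt_or_gt_of_ne hx0 with h | h
        · rw [Real.sign_of_neg h]; norm_num
        · rw [Real.sign_of_pos h]; norm_num
      rw [hG' x hx, abs_mul, habs, one_mul,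
        abs_of_nonneg (Real.rpow_nonneg (abs_nonneg x) m)]
      linarith
    · have hxI : x ∈ Set.Icc (-M) M := by
        constructor <;> [linarith [neg_abs_le x]; linarith [le_abs_self x]]
      have h1 := hCg x hxI
      rw [Real.norm_eq_abs] at h1
      have : (0:ℝ) ≤ |x| ^ m := Real.rpow_nonneg (abs_nonneg x) m
      linarith
  obtain ⟨CU', hCU'0, hCU'⟩ := hU_up
  obtain ⟨CG', hCG'0, hCG'⟩ := hG_up
  -- upper bound on W
  obtain ⟨S, hS_def⟩ : ∃ S : ℝ,
      S = α/2 + α*CU' + α*(b₀/p) + β*Cg^2/2 + 2*β + β*c*(CG'+1) := ⟨_, rfl⟩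
  obtain ⟨S', hS'_def⟩ : ∃ S' : ℝ, S' = max 1 S := ⟨_, rfl⟩
  have hS1 : (1:ℝ) ≤ S' := by rw [hS'_def]; exact le_max_left _ _
  have hS'0 : (0:ℝ) < S' := lt_of_lt_of_le one_pos hS1
  have hW_up : ∀ x y : ℝ, W x y ≤ S' * (1 + y ^ 2 + |x| ^ (m+1)) := by
    intro x y
    have hxm1 : (0:ℝ) ≤ |x| ^ (m+1) := Real.rpow_nonneg (abs_nonneg x) _
    have hy2 : (0:ℝ) ≤ y ^ 2 := sq_nonneg y
    have F1 : U x ≤ CU' + (b₀/p) * |x| ^ p := hCU' x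
    have F2 : |x| ^ p ≤ 1 + |x| ^ (m+1) :=
      aux_rpow_le_one_add (abs_nonneg x) hp.le (by linarith)
    have F2' : (b₀/p) * |x| ^ p ≤ (b₀/p) * (1 + |x| ^ (m+1)) :=
      mul_le_mul_of_nonneg_left F2 hb₀p
    have F3 : G x ≤ CG' + |x| ^ (m+1) := hCG' x
    have F3' : c * G x ≤ c * (CG' + |x| ^ (m+1)) := mul_le_mul_of_nonneg_left F3 hc.le
    have F4 : deriv G x * y ≤ (Cg + |x| ^ m) * |y| := by
      calc deriv G x * y ≤ |deriv G x * y| := le_abs_self _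
        _ = |deriv G x| * |y| := abs_mul _ _
        _ ≤ (Cg + |x| ^ m) * |y| := mul_le_mul_of_nonneg_right (hg_up x) (abs_nonneg y)
    have F5 : Cg * |y| ≤ (Cg^2 + y^2)/2 := by
      linarith [sq_nonneg (Cg - |y|), sq_abs y]
    have hxm : (0:ℝ) ≤ |x| ^ m := Real.rpow_nonneg (abs_nonneg x) m
    have F6 : |x| ^ m * |y| ≤ (|x| ^ (2*m) + y^2)/2 := by
      have h2m : |x| ^ (2*m) = |x| ^ m * |x| ^ m := by
        rw [two_mul, Real.rpow_add' (abs_nonneg x) (by linarith)]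
      rw [h2m]
      linarith [sq_nonneg (|x| ^ m - |y|), sq_abs y]
    have F7 : |x| ^ (2*m) ≤ 1 + |x| ^ (m+1) :=
      aux_rpow_le_one_add (abs_nonneg x) (by linarith) (by linarith)
    have B2 : deriv G x * y ≤ (Cg^2 + y^2)/2 + (1 + |x|^(m+1) + y^2)/2 := by
      calc deriv G x * y ≤ (Cg + |x| ^ m) * |y| := F4
        _ = Cg * |y| + |x| ^ m * |y| := by ring
        _ ≤ (Cg^2 + y^2)/2 + (|x| ^ (2*m) + y^2)/2 := add_le_add F5 F6
        _ ≤ (Cg^2 + y^2)/2 + (1 + |x|^(m+1) + y^2)/2 := by linarith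
    rw [hW_def]
    have e1 : α * (y ^ 2 / 2 + U x) ≤ α * (y^2/2 + CU' + (b₀/p) + (b₀/p) * |x|^(m+1)) := by
      apply mul_le_mul_of_nonneg_left _ hα.le
      linarith
    have e2 : β * (deriv G x * y + c * G x)
        ≤ β * ((Cg^2 + y^2)/2 + (1 + |x|^(m+1) + y^2)/2 + c*CG' + c*|x|^(m+1)) := by
      apply mul_le_mul_of_nonneg_left _ hβ.le
      linarith
    have hT1 : (1:ℝ) ≤ 1 + y^2 + |x|^(m+1) := by linarith
    have c1 : y^2/2 + CU' + (b₀/p) + (b₀/p) * |x|^(m+1)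
        ≤ (1/2 + CU' + (b₀/p)) * (1 + y^2 + |x|^(m+1)) := by
      have e3 : CU' * 1 ≤ CU' * (1 + y^2 + |x|^(m+1)) :=
        mul_le_mul_of_nonneg_left hT1 hCU'0
      have e4 : (b₀/p) * (1 + |x|^(m+1)) ≤ (b₀/p) * (1 + y^2 + |x|^(m+1)) :=
        mul_le_mul_of_nonneg_left (by linarith) hb₀p
      linarith [e3, e4, hxm1]
    have c2 : (Cg^2 + y^2)/2 + (1 + |x|^(m+1) + y^2)/2 + c*CG' + c*|x|^(m+1)
        ≤ (Cg^2/2 + 2 + c*CG' + c) * (1 + y^2 + |x|^(m+1)) := by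
      have e3 : Cg^2 * 1 ≤ Cg^2 * (1 + y^2 + |x|^(m+1)) :=
        mul_le_mul_of_nonneg_left hT1 (sq_nonneg Cg)
      have e4 : (c*CG') * 1 ≤ (c*CG') * (1 + y^2 + |x|^(m+1)) :=
        mul_le_mul_of_nonneg_left hT1 (mul_nonneg hc.le hCG'0)
      have e5 : c * |x|^(m+1) ≤ c * (1 + y^2 + |x|^(m+1)) :=
        mul_le_mul_of_nonneg_left (by linarith) hc.le
      linarith [e3, e4, e5, hc.le, hy2, hxm1]
    have hmid : α * (y^2/2 + CU' + (b₀/p) + (b₀/p) * |x|^(m+1))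
        + β * ((Cg^2 + y^2)/2 + (1 + |x|^(m+1) + y^2)/2 + c*CG' + c*|x|^(m+1))
        ≤ S * (1 + y^2 + |x|^(m+1)) := by
      have d1 := mul_le_mul_of_nonneg_left c1 hα.le
      have d2 := mul_le_mul_of_nonneg_left c2 hβ.le
      have deq : α * ((1/2 + CU' + (b₀/p)) * (1 + y^2 + |x|^(m+1)))
          + β * ((Cg^2/2 + 2 + c*CG' + c) * (1 + y^2 + |x|^(m+1)))
          = S * (1 + y^2 + |x|^(m+1)) := by
        rw [hS_def]; ring
      linarith
    have hSS' : S ≤ S' := by rw [hS'_def]; exact le_max_right _ _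
    have hAS : S * (1 + y^2 + |x|^(m+1)) ≤ S' * (1 + y^2 + |x|^(m+1)) :=
      mul_le_mul_of_nonneg_right hSS' (by linarith)
    linarith
  -- bound on W^θ
  have hWθ : ∀ x y : ℝ, W x y ^ θ ≤ S' * (2 + y ^ 2 + |x| ^ q) := by
    intro x y
    have hxm1 : (0:ℝ) ≤ |x| ^ (m+1) := Real.rpow_nonneg (abs_nonneg x) _
    have hy2 : (0:ℝ) ≤ y ^ 2 := sq_nonneg y
    have hW0 : (0:ℝ) ≤ W x y := le_trans zero_le_one (hW_one x y)
    have h1 : W x y ^ θ ≤ (S' * (1 + y ^ 2 + |x| ^ (m+1))) ^ θ :=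
      Real.rpow_le_rpow hW0 (hW_up x y) hθ0.le
    have hA0 : (0:ℝ) ≤ 1 + y ^ 2 + |x| ^ (m+1) := by linarith
    have h2 : (S' * (1 + y ^ 2 + |x| ^ (m+1))) ^ θ
        = S' ^ θ * (1 + y ^ 2 + |x| ^ (m+1)) ^ θ :=
      Real.mul_rpow hS'0.le hA0
    have h3 : S' ^ θ ≤ S' := by
      calc S' ^ θ ≤ S' ^ (1:ℝ) := Real.rpow_le_rpow_of_exponent_le hS1 hθ1
        _ = S' := Real.rpow_one _
    have h4 : (1 + y ^ 2 + |x| ^ (m+1)) ^ θ ≤ 2 + y ^ 2 + |x| ^ q := by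
      have s1 : ((1 + y ^ 2) + |x| ^ (m+1)) ^ θ
          ≤ (1 + y ^ 2) ^ θ + (|x| ^ (m+1)) ^ θ :=
        aux_rpow_add_le (by linarith) hxm1 hθ0.le hθ1
      have s2 : (1 + y ^ 2) ^ θ ≤ 1 + (1 + y ^ 2) ^ (1:ℝ) :=
        aux_rpow_le_one_add (by linarith) hθ0.le hθ1
      rw [Real.rpow_one] at s2
      have s3 : (|x| ^ (m+1)) ^ θ = |x| ^ q := by
        rw [← Real.rpow_mul (abs_nonneg x)]
        congr 1
        rw [hθ_def, hq_def]
        field_simp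
      rw [s3] at s1
      linarith
    have hAθ0 : (0:ℝ) ≤ (1 + y ^ 2 + |x| ^ (m+1)) ^ θ := Real.rpow_nonneg hA0 θ
    calc W x y ^ θ ≤ S' ^ θ * (1 + y ^ 2 + |x| ^ (m+1)) ^ θ := by rw [← h2]; exact h1
      _ ≤ S' * (2 + y ^ 2 + |x| ^ q) :=
        mul_le_mul h3 h4 hAθ0 hS'0.le
  -- conclusion
  have hmin : 0 < min δ (β * a₀) := lt_min hδ (mul_pos hβ ha₀)
  refine ⟨K₁ + 2 * min δ (β * a₀), min δ (β * a₀) / S',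
    div_pos hmin hS'0, fun x y => ?_⟩
  have hexp : (p - 1 + m) / (m + 1) = θ := by rw [hθ_def, hq_def]
  rw [hexp]
  have hxq : (0:ℝ) ≤ |x| ^ q := Real.rpow_nonneg (abs_nonneg x) q
  have hy2 : (0:ℝ) ≤ y ^ 2 := sq_nonneg y
  have h1 := hWθ x y
  have hLpos : (0:ℝ) ≤ min δ (β * a₀) / S' := (div_pos hmin hS'0).le
  have h2 : min δ (β * a₀) / S' * W x y ^ θ
      ≤ min δ (β * a₀) / S' * (S' * (2 + y ^ 2 + |x| ^ q)) :=
    mul_le_mul_of_nonneg_left h1 hLpos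
  have h3 : min δ (β * a₀) / S' * (S' * (2 + y ^ 2 + |x| ^ q))
      = min δ (β * a₀) * (2 + y ^ 2 + |x| ^ q) := by
    field_simp
  have h4 : min δ (β * a₀) * y ^ 2 ≤ δ * y ^ 2 :=
    mul_le_mul_of_nonneg_right (min_le_left _ _) hy2
  have h5 : min δ (β * a₀) * |x| ^ q ≤ β * a₀ * |x| ^ q :=
    mul_le_mul_of_nonneg_right (min_le_right _ _) hxq
  have h6 := hAW_bound x y
  rw [h3] at h2
  have h7 : min δ (β * a₀) * (2 + y ^ 2 + |x| ^ q)
      = 2 * min δ (β * a₀) + min δ (β * a₀) * y ^ 2 + min δ (β * a₀) * |x| ^ q := by ring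
  rw [h7] at h2
  linarith
end

section
/- Let F be a probability measure on (0,∞), let 0 < δ < 1 and α > 0 be such that ∫₀^∞ e^{α(log(1+u))^{δ}} F(du) < ∞. Let δ' ∈ (0,δ] and α' > 0, with α' < α in the case δ' = δ. Define V(x) := exp( α' (log x)^{δ'} ) for x ≥ 1. Then: (a) lim_{x→∞} (log x)^{1−δ'} · V(x)^{−1} · ∫₀^∞ ( V(x+u) − V(x) ) F(du) = 0; and (b) for every λ > 0, μ > 0 and ε ∈ (0,1) there exists a constant b < ∞ such that for all x ≥ e, λ ∫₀^∞ ( V(x+u) − V(x) ) F(du) − μ x V'(x) ≤ −(1−ε) μ α' δ' (log x)^{δ'−1} V(x) + b. -/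
open MeasureTheory Filter
open scoped ENNReal

set_option maxHeartbeats 1000000

private lemma aux_rpow_subadd {p a b : ℝ} (hp0 : 0 ≤ p) (hp1 : p ≤ 1) (ha : 0 ≤ a) (hb : 0 ≤ b) :
    (a + b) ^ p ≤ a ^ p + b ^ p := by
  calc (a + b) ^ p = (((a.toNNReal + b.toNNReal) ^ p : NNReal) : ℝ) := by
        rw [NNReal.coe_rpow, NNReal.coe_add, Real.coe_toNNReal a ha, Real.coe_toNNReal b hb]
    _ ≤ ((a.toNNReal ^ p + b.toNNReal ^ p : NNReal) : ℝ) := by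
        exact_mod_cast NNReal.rpow_add_le_add_rpow _ _ hp0 hp1
    _ = a ^ p + b ^ p := by
        rw [NNReal.coe_add, NNReal.coe_rpow, NNReal.coe_rpow, Real.coe_toNNReal a ha,
          Real.coe_toNNReal b hb]

private lemma aux_rpow_mvt {p s t : ℝ} (hp0 : 0 < p) (hp1 : p ≤ 1) (hs : 0 < s) (hst : s ≤ t) :
    t ^ p ≤ s ^ p + p * s ^ (p - 1) * (t - s) := by
  have hz : (0:ℝ) ≤ (t - s) / s := div_nonneg (by linarith) hs.le
  have h := rpow_one_add_le_one_add_mul_self (s := (t - s) / s) (by linarith) hp0.le hp1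
  have hts : 1 + (t - s) / s = t / s := by field_simp; ring
  rw [hts, Real.div_rpow (by linarith : (0:ℝ) ≤ t) hs.le] at h
  have hsp : 0 < s ^ p := Real.rpow_pos_of_pos hs p
  have key : t ^ p ≤ s ^ p * (1 + p * ((t - s) / s)) := by
    calc t ^ p = s ^ p * (t ^ p / s ^ p) := by field_simp
      _ ≤ s ^ p * (1 + p * ((t - s) / s)) := by
          exact mul_le_mul_of_nonneg_left h hsp.le
  have hspow : s ^ p / s = s ^ (p - 1) := by
    rw [Real.rpow_sub hs, Real.rpow_one]
  calc t ^ p ≤ s ^ p * (1 + p * ((t - s) / s)) := key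
    _ = s ^ p + p * (s ^ p / s) * (t - s) := by field_simp
    _ = s ^ p + p * s ^ (p - 1) * (t - s) := by rw [hspow]

private lemma aux_core (δ α δ' α' C c : ℝ) (hδ0 : 0 < δ) (hα : 0 < α)
    (hδ'0 : 0 < δ') (hδ'1 : δ' ≤ 1) (hα' : 0 < α') (hC1 : 1 ≤ C) (hc0 : 0 < c) (hcα : c ≤ α)
    (hglob : ∀ L : ℝ, 0 ≤ L → (1 + L) * Real.exp (α' * L ^ δ') ≤ C * Real.exp ((α - c) * L ^ δ))
    {x u : ℝ} (hx : Real.exp 1 ≤ x) (hu : 0 < u) :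
    (0 ≤ Real.exp (α' * Real.log (x + u) ^ δ') - Real.exp (α' * Real.log x ^ δ')) ∧
    (Real.log x ^ (1 - δ') * ((Real.exp (α' * Real.log x ^ δ'))⁻¹ *
        (Real.exp (α' * Real.log (x + u) ^ δ') - Real.exp (α' * Real.log x ^ δ')))
      ≤ α' * δ' * Real.exp (α' * δ') * Real.log (1 + u) +
        (Real.exp (α' * Real.log 2 ^ δ') * C) * Real.exp (α * Real.log (1 + u) ^ δ)) ∧
    (Real.exp (α' * Real.log (x + u) ^ δ') - Real.exp (α' * Real.log x ^ δ')
      ≤ Real.exp (α' * Real.log x ^ δ') *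
        ((Real.exp (α' * Real.log 2 ^ δ') * C) * Real.exp (α * Real.log (1 + u) ^ δ))) ∧
    (Real.log x ^ (1 - δ') * ((Real.exp (α' * Real.log x ^ δ'))⁻¹ *
        (Real.exp (α' * Real.log (x + u) ^ δ') - Real.exp (α' * Real.log x ^ δ')))
      ≤ α' * δ' * Real.exp (α' * δ' * Real.log (1 + u)) * u / x) := by
  have hx0 : 0 < x := lt_of_lt_of_le (Real.exp_pos 1) hx
  have hxu0 : 0 < x + u := by linarith
  have h1u : (1:ℝ) ≤ 1 + u := by linarith
  have hx1 : (1:ℝ) ≤ x := le_trans (by nlinarith [Real.add_one_le_exp (1:ℝ)]) hx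
  have hsublog : Real.log (x + u) - Real.log x ≤ Real.log (1 + u) := by
    have hmul : x + u ≤ x * (1 + u) := by nlinarith
    have h := Real.log_le_log hxu0 hmul
    rw [Real.log_mul (ne_of_gt hx0) (by linarith)] at h
    linarith
  have hloglog : Real.log (x + u) ≤ Real.log 2 + (Real.log x + Real.log (1 + u)) := by
    have h2 : x + u ≤ 2 * (x * (1 + u)) := by nlinarith
    have h := Real.log_le_log hxu0 h2
    rw [Real.log_mul two_ne_zero (by positivity), Real.log_mul (ne_of_gt hx0) (by linarith)] at h
    linarith
  have hstlog : Real.log x ≤ Real.log (x + u) := Real.log_le_log hx0 (by linarith)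
  have hdivlog : Real.log ((x + u) / x) = Real.log (x + u) - Real.log x :=
    Real.log_div (ne_of_gt hxu0) (ne_of_gt hx0)
  obtain ⟨s, hsdef⟩ : ∃ s, s = Real.log x := ⟨_, rfl⟩
  obtain ⟨t, htdef⟩ : ∃ t, t = Real.log (x + u) := ⟨_, rfl⟩
  obtain ⟨L, hLdef⟩ : ∃ L, L = Real.log (1 + u) := ⟨_, rfl⟩
  rw [← hsdef, ← htdef, ← hLdef]
  rw [← hsdef, ← htdef, ← hLdef] at hsublog
  rw [← hsdef, ← htdef, ← hLdef] at hloglog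
  rw [← hsdef, ← htdef] at hstlog
  rw [← hsdef, ← htdef] at hdivlog
  have hs1 : 1 ≤ s := hsdef ▸ (Real.le_log_iff_exp_le hx0).2 hx
  have hs0 : 0 < s := lt_of_lt_of_le one_pos hs1
  have hL0 : 0 ≤ L := hLdef ▸ Real.log_nonneg h1u
  have hst : s ≤ t := hstlog
  have ht0 : 0 < t := lt_of_lt_of_le hs0 hst
  have hsub : t - s ≤ L := hsublog
  have ht3 : t ^ δ' ≤ Real.log 2 ^ δ' + (s ^ δ' + L ^ δ') := by
    have hlog : t ≤ Real.log 2 + (s + L) := hloglog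
    have hlog2 : (0:ℝ) ≤ Real.log 2 := Real.log_nonneg one_le_two
    calc t ^ δ' ≤ (Real.log 2 + (s + L)) ^ δ' :=
          Real.rpow_le_rpow ht0.le hlog hδ'0.le
      _ ≤ Real.log 2 ^ δ' + (s + L) ^ δ' :=
          aux_rpow_subadd hδ'0.le hδ'1 hlog2 (by linarith)
      _ ≤ Real.log 2 ^ δ' + (s ^ δ' + L ^ δ') := by
          linarith [aux_rpow_subadd hδ'0.le hδ'1 hs0.le hL0]
  have hmvt : t ^ δ' ≤ s ^ δ' + δ' * s ^ (δ' - 1) * (t - s) := aux_rpow_mvt hδ'0 hδ'1 hs0 hst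
  have hfac : 0 ≤ δ' * s ^ (δ' - 1) := by positivity
  obtain ⟨Δ, hΔdef⟩ : ∃ D, D = α' * t ^ δ' - α' * s ^ δ' := ⟨_, rfl⟩
  have hID : (Real.exp (α' * s ^ δ'))⁻¹ * (Real.exp (α' * t ^ δ') - Real.exp (α' * s ^ δ'))
      = Real.exp Δ - 1 := by
    rw [hΔdef, Real.exp_sub]
    field_simp
  have hΔ0 : 0 ≤ Δ := by
    have h := Real.rpow_le_rpow hs0.le hst hδ'0.le
    rw [hΔdef]; nlinarith
  have hΔ1' : Δ ≤ α' * δ' * s ^ (δ' - 1) * (t - s) := by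
    have := mul_le_mul_of_nonneg_left hmvt hα'.le
    rw [hΔdef]; nlinarith
  have hΔ1 : Δ ≤ α' * δ' * s ^ (δ' - 1) * L := by
    have h := mul_le_mul_of_nonneg_left hsub (by positivity : (0:ℝ) ≤ α' * δ' * s ^ (δ' - 1))
    nlinarith
  have hΔ2 : Δ ≤ α' * (Real.log 2 ^ δ' + L ^ δ') := by
    have h := mul_le_mul_of_nonneg_left
      (show t ^ δ' - s ^ δ' ≤ Real.log 2 ^ δ' + L ^ δ' by linarith) hα'.le
    rw [hΔdef]; nlinarith
  have hexp1 : Real.exp Δ - 1 ≤ Δ * Real.exp Δ := by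
    have h1 := Real.add_one_le_exp (-Δ)
    have h2 : Real.exp (-Δ) * Real.exp Δ = 1 := by rw [← Real.exp_add]; simp
    nlinarith [Real.exp_pos Δ]
  have hs_e : s ^ (1 - δ') * s ^ (δ' - 1) = 1 := by
    rw [← Real.rpow_add hs0]; norm_num
  have hsd1 : s ^ (δ' - 1) ≤ 1 := Real.rpow_le_one_of_one_le_of_nonpos hs1 (by linarith)
  have hs1d0 : 0 ≤ s ^ (1 - δ') := Real.rpow_nonneg hs0.le _
  have hnn : 0 ≤ Real.exp (α' * t ^ δ') - Real.exp (α' * s ^ δ') := by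
    have h := Real.rpow_le_rpow hs0.le hst hδ'0.le
    have := Real.exp_le_exp.2 (mul_le_mul_of_nonneg_left h hα'.le)
    linarith
  have hEpos : 0 < Real.exp (α' * s ^ δ') := Real.exp_pos _
  refine ⟨hnn, ?_, ?_, ?_⟩
  · -- main dominated bound
    rw [hID]
    have hterm2pos : 0 ≤ (Real.exp (α' * Real.log 2 ^ δ') * C) * Real.exp (α * L ^ δ) := by
      positivity
    have hterm1pos : 0 ≤ α' * δ' * Real.exp (α' * δ') * L := by positivity
    rcases le_or_gt L (s ^ (1 - δ')) with hcase1 | hcase1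
    · have hss' : s ^ (δ' - 1) * s ^ (1 - δ') = 1 := by
        rw [← Real.rpow_add hs0]; norm_num
      have hΔsmall : Δ ≤ α' * δ' := by
        have h1 : α' * δ' * s ^ (δ' - 1) * L ≤ α' * δ' * s ^ (δ' - 1) * s ^ (1 - δ') := by
          apply mul_le_mul_of_nonneg_left hcase1
          positivity
        have h2 : α' * δ' * s ^ (δ' - 1) * s ^ (1 - δ') = α' * δ' := by
          calc α' * δ' * s ^ (δ' - 1) * s ^ (1 - δ')
              = α' * δ' * (s ^ (δ' - 1) * s ^ (1 - δ')) := by ring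
            _ = α' * δ' := by rw [hss']; ring
        linarith
      have hexpΔ : Real.exp Δ ≤ Real.exp (α' * δ') := Real.exp_le_exp.2 hΔsmall
      have k1 : Real.exp Δ - 1 ≤ (α' * δ' * s ^ (δ' - 1) * L) * Real.exp (α' * δ') := by
        calc Real.exp Δ - 1 ≤ Δ * Real.exp Δ := hexp1
          _ ≤ (α' * δ' * s ^ (δ' - 1) * L) * Real.exp (α' * δ') :=
              mul_le_mul hΔ1 hexpΔ (Real.exp_nonneg _) (by positivity)
      have key : s ^ (1 - δ') * (Real.exp Δ - 1) ≤ α' * δ' * Real.exp (α' * δ') * L := by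
        calc s ^ (1 - δ') * (Real.exp Δ - 1)
            ≤ s ^ (1 - δ') * ((α' * δ' * s ^ (δ' - 1) * L) * Real.exp (α' * δ')) :=
              mul_le_mul_of_nonneg_left k1 hs1d0
          _ = (s ^ (1 - δ') * s ^ (δ' - 1)) * (α' * δ' * L * Real.exp (α' * δ')) := by ring
          _ = α' * δ' * Real.exp (α' * δ') * L := by rw [hs_e]; ring
      linarith
    · have k1 : s ^ (1 - δ') * (Real.exp Δ - 1) ≤ L * Real.exp Δ := by
        have h1 : Real.exp Δ - 1 ≤ Real.exp Δ := by linarith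
        calc s ^ (1 - δ') * (Real.exp Δ - 1) ≤ s ^ (1 - δ') * Real.exp Δ :=
              mul_le_mul_of_nonneg_left h1 hs1d0
          _ ≤ L * Real.exp Δ :=
              mul_le_mul_of_nonneg_right hcase1.le (Real.exp_nonneg _)
      have k2 : Real.exp Δ ≤ Real.exp (α' * Real.log 2 ^ δ') * Real.exp (α' * L ^ δ') := by
        rw [← Real.exp_add]
        apply Real.exp_le_exp.2
        nlinarith
      have k3 : L * Real.exp (α' * L ^ δ') ≤ C * Real.exp ((α - c) * L ^ δ) := by
        have h := hglob L hL0
        have h2 : L * Real.exp (α' * L ^ δ') ≤ (1 + L) * Real.exp (α' * L ^ δ') :=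
          mul_le_mul_of_nonneg_right (by linarith) (Real.exp_nonneg _)
        linarith
      have k4 : Real.exp ((α - c) * L ^ δ) ≤ Real.exp (α * L ^ δ) := by
        apply Real.exp_le_exp.2
        nlinarith [Real.rpow_nonneg hL0 δ]
      have key : s ^ (1 - δ') * (Real.exp Δ - 1)
          ≤ (Real.exp (α' * Real.log 2 ^ δ') * C) * Real.exp (α * L ^ δ) := by
        calc s ^ (1 - δ') * (Real.exp Δ - 1) ≤ L * Real.exp Δ := k1
          _ ≤ L * (Real.exp (α' * Real.log 2 ^ δ') * Real.exp (α' * L ^ δ')) :=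
              mul_le_mul_of_nonneg_left k2 hL0
          _ = Real.exp (α' * Real.log 2 ^ δ') * (L * Real.exp (α' * L ^ δ')) := by ring
          _ ≤ Real.exp (α' * Real.log 2 ^ δ') * (C * Real.exp ((α - c) * L ^ δ)) :=
              mul_le_mul_of_nonneg_left k3 (Real.exp_nonneg _)
          _ ≤ Real.exp (α' * Real.log 2 ^ δ') * (C * Real.exp (α * L ^ δ)) := by
              apply mul_le_mul_of_nonneg_left _ (Real.exp_nonneg _)
              exact mul_le_mul_of_nonneg_left k4 (by linarith)
          _ = (Real.exp (α' * Real.log 2 ^ δ') * C) * Real.exp (α * L ^ δ) := by ring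
      linarith
  · -- integrable-majorant bound
    have k2 : Real.exp (α' * t ^ δ')
        ≤ Real.exp (α' * s ^ δ') * (Real.exp (α' * Real.log 2 ^ δ') * Real.exp (α' * L ^ δ')) := by
      rw [← Real.exp_add, ← Real.exp_add]
      apply Real.exp_le_exp.2
      nlinarith [mul_le_mul_of_nonneg_left ht3 hα'.le]
    have k3 : Real.exp (α' * L ^ δ') ≤ C * Real.exp ((α - c) * L ^ δ) := by
      have h := hglob L hL0
      have h2 : Real.exp (α' * L ^ δ') ≤ (1 + L) * Real.exp (α' * L ^ δ') :=
        le_mul_of_one_le_left (Real.exp_nonneg _) (by linarith)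
      linarith
    have k4 : Real.exp ((α - c) * L ^ δ) ≤ Real.exp (α * L ^ δ) := by
      apply Real.exp_le_exp.2
      nlinarith [Real.rpow_nonneg hL0 δ]
    have k5 : Real.exp (α' * L ^ δ') ≤ C * Real.exp (α * L ^ δ) := by
      calc Real.exp (α' * L ^ δ') ≤ C * Real.exp ((α - c) * L ^ δ) := k3
        _ ≤ C * Real.exp (α * L ^ δ) := mul_le_mul_of_nonneg_left k4 (by linarith)
    calc Real.exp (α' * t ^ δ') - Real.exp (α' * s ^ δ') ≤ Real.exp (α' * t ^ δ') := by linarith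
      _ ≤ Real.exp (α' * s ^ δ') * (Real.exp (α' * Real.log 2 ^ δ') * Real.exp (α' * L ^ δ')) := k2
      _ ≤ Real.exp (α' * s ^ δ') * (Real.exp (α' * Real.log 2 ^ δ') * (C * Real.exp (α * L ^ δ))) := by
          apply mul_le_mul_of_nonneg_left _ (Real.exp_nonneg _)
          exact mul_le_mul_of_nonneg_left k5 (Real.exp_nonneg _)
      _ = Real.exp (α' * s ^ δ') * ((Real.exp (α' * Real.log 2 ^ δ') * C) * Real.exp (α * L ^ δ)) := by
          ring
  · -- decay bound
    rw [hID]
    have hΔ3 : Δ ≤ α' * δ' * L := by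
      have h := mul_le_mul_of_nonneg_right hsd1 (mul_nonneg (mul_nonneg hα'.le hδ'0.le) hL0)
      rw [one_mul] at h
      linarith [hΔ1]
    have hsubx : t - s ≤ u / x := by
      have h1 : Real.log ((x + u) / x) ≤ (x + u) / x - 1 :=
        Real.log_le_sub_one_of_pos (div_pos hxu0 hx0)
      have h2 : (x + u) / x - 1 = u / x := by field_simp; ring
      rw [hdivlog, h2] at h1
      exact h1
    have k1 : Δ ≤ α' * δ' * s ^ (δ' - 1) * (u / x) := by
      have h := mul_le_mul_of_nonneg_left hsubx (by positivity : (0:ℝ) ≤ α' * δ' * s ^ (δ' - 1))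
      linarith only [hΔ1', h]
    have k2 : Real.exp Δ ≤ Real.exp (α' * δ' * L) := Real.exp_le_exp.2 hΔ3
    have k3 : Real.exp Δ - 1 ≤ (α' * δ' * s ^ (δ' - 1) * (u / x)) * Real.exp (α' * δ' * L) :=
      le_trans hexp1 (mul_le_mul k1 k2 (Real.exp_nonneg _) (by positivity))
    calc s ^ (1 - δ') * (Real.exp Δ - 1)
        ≤ s ^ (1 - δ') * ((α' * δ' * s ^ (δ' - 1) * (u / x)) * Real.exp (α' * δ' * L)) :=
          mul_le_mul_of_nonneg_left k3 hs1d0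
      _ = (s ^ (1 - δ') * s ^ (δ' - 1)) * (α' * δ' * Real.exp (α' * δ' * L) * u / x) := by ring
      _ = α' * δ' * Real.exp (α' * δ' * L) * u / x := by rw [hs_e, one_mul]

private lemma aux_log_isLittleO {δ : ℝ} (hδ0 : 0 < δ) :
    (fun L : ℝ => Real.log (1 + L)) =o[atTop] fun L : ℝ => L ^ δ := by
  have h1 : (fun L : ℝ => Real.log (1 + L)) =o[atTop] fun L : ℝ => (1 + L) ^ δ :=
    (isLittleO_log_rpow_atTop hδ0).comp_tendsto (tendsto_atTop_add_const_left _ 1 tendsto_id)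
  refine h1.trans_isBigO (Asymptotics.IsBigO.of_bound ((2:ℝ) ^ δ) ?_)
  filter_upwards [eventually_ge_atTop (1:ℝ)] with L hL
  have hL0 : (0:ℝ) ≤ L := le_trans zero_le_one hL
  have h2 : (1 + L) ^ δ ≤ (2 * L) ^ δ :=
    Real.rpow_le_rpow (by linarith) (by linarith) hδ0.le
  rw [Real.norm_eq_abs, Real.norm_eq_abs, abs_of_nonneg (Real.rpow_nonneg (by linarith) _),
    abs_of_nonneg (Real.rpow_nonneg hL0 _)]
  calc (1 + L) ^ δ ≤ (2 * L) ^ δ := h2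
    _ = 2 ^ δ * L ^ δ := Real.mul_rpow (by norm_num) hL0

private lemma aux_rpow_isLittleO {δ' δ : ℝ} (hδ'0 : 0 < δ') (hlt : δ' < δ) :
    (fun L : ℝ => L ^ δ') =o[atTop] fun L : ℝ => L ^ δ := by
  rw [Asymptotics.isLittleO_iff_tendsto']
  · have h := tendsto_rpow_neg_atTop (y := δ - δ') (by linarith)
    apply h.congr'
    filter_upwards [eventually_gt_atTop (0:ℝ)] with L hL
    rw [show -(δ - δ') = δ' - δ by ring, Real.rpow_sub hL]
  · filter_upwards [eventually_gt_atTop (0:ℝ)] with L hL h0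
    exact absurd h0 (ne_of_gt (Real.rpow_pos_of_pos hL _))

private lemma aux_global_bound (δ α δ' α' : ℝ) (hδ0 : 0 < δ) (hα : 0 < α) (hδ'0 : 0 < δ')
    (hδ'le : δ' ≤ δ) (hα' : 0 < α') (hcase : δ' = δ → α' < α) :
    ∃ C : ℝ, 1 ≤ C ∧ ∃ c : ℝ, 0 < c ∧ c ≤ α ∧ ∀ L : ℝ, 0 ≤ L →
      (1 + L) * Real.exp (α' * L ^ δ') ≤ C * Real.exp ((α - c) * L ^ δ) := by
  obtain ⟨c, hc0, hcα, hev⟩ : ∃ c : ℝ, 0 < c ∧ c ≤ α ∧ ∀ᶠ L in atTop,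
      Real.log (1 + L) + α' * L ^ δ' - (α - c) * L ^ δ ≤ -(c / 2) * L ^ δ := by
    rcases eq_or_lt_of_le hδ'le with heq | hlt
    · have hα'α : α' < α := hcase heq
      refine ⟨(α - α') / 2, by linarith, by linarith, ?_⟩
      have h := (aux_log_isLittleO hδ0).def (show (0:ℝ) < (α - α')/2/2 by linarith)
      filter_upwards [h, eventually_ge_atTop (0:ℝ)] with L hL hL0
      rw [Real.norm_eq_abs, Real.norm_eq_abs, abs_of_nonneg (Real.rpow_nonneg hL0 _)] at hL
      have := le_abs_self (Real.log (1 + L))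
      rw [heq]
      nlinarith [Real.rpow_nonneg hL0 δ]
    · refine ⟨α / 2, by linarith, by linarith, ?_⟩
      have hsum : (fun L : ℝ => Real.log (1 + L) + α' * L ^ δ') =o[atTop]
          fun L : ℝ => L ^ δ :=
        (aux_log_isLittleO hδ0).add ((aux_rpow_isLittleO hδ'0 hlt).const_mul_left α')
      have h := hsum.def (show (0:ℝ) < α/4 by linarith)
      filter_upwards [h, eventually_ge_atTop (0:ℝ)] with L hL hL0
      rw [Real.norm_eq_abs, Real.norm_eq_abs, abs_of_nonneg (Real.rpow_nonneg hL0 _)] at hL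
      have := le_abs_self (Real.log (1 + L) + α' * L ^ δ')
      nlinarith [Real.rpow_nonneg hL0 δ]
  have htb : Tendsto (fun L : ℝ => Real.log (1 + L) + α' * L ^ δ' - (α - c) * L ^ δ)
      atTop atBot := by
    apply tendsto_atBot_mono' atTop hev
    have h : Tendsto (fun L : ℝ => L ^ δ) atTop atTop := tendsto_rpow_atTop hδ0
    exact h.const_mul_atTop_of_neg (by linarith : -(c/2) < 0)
  obtain ⟨A, hA⟩ := (htb.eventually (eventually_le_atBot (0:ℝ))).exists_forall_of_atTop
  set A' : ℝ := max A 0 with hA'def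
  have hcont : ContinuousOn
      (fun L : ℝ => Real.exp (Real.log (1 + L) + α' * L ^ δ' - (α - c) * L ^ δ))
      (Set.Icc 0 A') := by
    apply Real.continuous_exp.comp_continuousOn
    apply ContinuousOn.sub
    · apply ContinuousOn.add
      · apply ContinuousOn.log
        · exact (continuous_const.add continuous_id).continuousOn
        · intro L hL
          have : (0:ℝ) ≤ L := hL.1
          positivity
      · exact continuousOn_const.mul (continuousOn_id.rpow_const fun L _ => Or.inr hδ'0.le)
    · exact continuousOn_const.mul (continuousOn_id.rpow_const fun L _ => Or.inr hδ0.le)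
  obtain ⟨z, hz, hzmax⟩ := isCompact_Icc.exists_isMaxOn
    (⟨0, Set.left_mem_Icc.2 (le_max_right A 0)⟩ : (Set.Icc (0:ℝ) A').Nonempty) hcont
  set C : ℝ := max 1 (Real.exp (Real.log (1 + z) + α' * z ^ δ' - (α - c) * z ^ δ)) with hCdef
  refine ⟨C, le_max_left _ _, c, hc0, hcα, fun L hL0 => ?_⟩
  have hexpC : Real.exp (Real.log (1 + L) + α' * L ^ δ' - (α - c) * L ^ δ) ≤ C := by
    rcases le_or_gt L A' with hLA | hLA
    · exact le_trans (hzmax ⟨hL0, hLA⟩) (le_max_right _ _)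
    · have h0 : Real.log (1 + L) + α' * L ^ δ' - (α - c) * L ^ δ ≤ 0 :=
        hA L (le_trans (le_max_left A 0) hLA.le)
      calc Real.exp _ ≤ Real.exp 0 := Real.exp_le_exp.2 h0
        _ = 1 := Real.exp_zero
        _ ≤ C := le_max_left _ _
  have h1L : (0:ℝ) < 1 + L := by linarith
  calc (1 + L) * Real.exp (α' * L ^ δ')
      = Real.exp (Real.log (1 + L) + α' * L ^ δ' - (α - c) * L ^ δ) *
        Real.exp ((α - c) * L ^ δ) := by
        rw [← Real.exp_add, sub_add_cancel, Real.exp_add, Real.exp_log h1L]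
    _ ≤ C * Real.exp ((α - c) * L ^ δ) :=
        mul_le_mul_of_nonneg_right hexpC (Real.exp_nonneg _)

/-- Drift computation for the compound-Poisson-driven Ornstein-Uhlenbeck process with
heavy-tailed jump law `F`: if `∫₀^∞ e^{α(log(1+u))^δ} F(du) < ∞`, `0 < δ' ≤ δ`,
`α' > 0` (with `α' < α` when `δ' = δ`) and `V(x) = exp(α'(log x)^{δ'})`, then
(a) `(log x)^{1-δ'} V(x)⁻¹ ∫₀^∞ (V(x+u) - V(x)) F(du) → 0` as `x → ∞`, and
(b) for all `λ, μ > 0` and `ε ∈ (0,1)` there is `b < ∞` such that for all `x ≥ e`,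
`λ∫₀^∞(V(x+u)-V(x))F(du) - μ x V'(x) ≤ -(1-ε) μ α' δ' (log x)^{δ'-1} V(x) + b`. -/
theorem compound_poisson_OU_subexponential_drift
    (F : Measure ℝ) [IsProbabilityMeasure F] (hF_supp : F (Set.Iic 0) = 0)
    (δ α : ℝ) (hδ0 : 0 < δ) (hδ1 : δ < 1) (hα : 0 < α)
    (hF_int : (∫⁻ u in Set.Ioi (0:ℝ),
      ENNReal.ofReal (Real.exp (α * Real.log (1 + u) ^ δ)) ∂F) < ⊤)
    (δ' α' : ℝ) (hδ'0 : 0 < δ') (hδ'le : δ' ≤ δ) (hα' : 0 < α')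
    (hcase : δ' = δ → α' < α)
    (V : ℝ → ℝ) (hV_def : ∀ x : ℝ, V x = Real.exp (α' * Real.log x ^ δ')) :
    Tendsto
      (fun x : ℝ => Real.log x ^ (1 - δ') * (V x)⁻¹ *
        ∫ u in Set.Ioi (0:ℝ), (V (x + u) - V x) ∂F)
      atTop (nhds 0) ∧
    ∀ lam mu ε : ℝ, 0 < lam → 0 < mu → 0 < ε → ε < 1 →
      ∃ b : ℝ, ∀ x : ℝ, Real.exp 1 ≤ x →
        lam * (∫ u in Set.Ioi (0:ℝ), (V (x + u) - V x) ∂F) - mu * x * deriv V x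
          ≤ -(1 - ε) * mu * α' * δ' * Real.log x ^ (δ' - 1) * V x + b := by
  have hVfun : V = fun y : ℝ => Real.exp (α' * Real.log y ^ δ') := funext hV_def
  subst hVfun
  show Tendsto
      (fun x : ℝ => Real.log x ^ (1 - δ') * (Real.exp (α' * Real.log x ^ δ'))⁻¹ *
        ∫ u in Set.Ioi (0:ℝ),
          (Real.exp (α' * Real.log (x + u) ^ δ') - Real.exp (α' * Real.log x ^ δ')) ∂F)
      atTop (nhds 0) ∧
    ∀ lam mu ε : ℝ, 0 < lam → 0 < mu → 0 < ε → ε < 1 →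
      ∃ b : ℝ, ∀ x : ℝ, Real.exp 1 ≤ x →
        lam * (∫ u in Set.Ioi (0:ℝ),
            (Real.exp (α' * Real.log (x + u) ^ δ') - Real.exp (α' * Real.log x ^ δ')) ∂F) -
          mu * x * deriv (fun y : ℝ => Real.exp (α' * Real.log y ^ δ')) x
          ≤ -(1 - ε) * mu * α' * δ' * Real.log x ^ (δ' - 1) *
              Real.exp (α' * Real.log x ^ δ') + b
  have hδ'1 : δ' ≤ 1 := le_of_lt (lt_of_le_of_lt hδ'le hδ1)
  obtain ⟨C, hC1, c, hc0, hcα, hglob⟩ :=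
    aux_global_bound δ α δ' α' hδ0 hα hδ'0 hδ'le hα' hcase
  have hC0 : (0:ℝ) < C := lt_of_lt_of_le one_pos hC1
  -- measurability
  have hmble : ∀ x : ℝ, 0 < x → AEStronglyMeasurable
      (fun u : ℝ => Real.exp (α' * Real.log (x + u) ^ δ') - Real.exp (α' * Real.log x ^ δ'))
      (F.restrict (Set.Ioi 0)) := by
    intro x hxpos
    apply ContinuousOn.aestronglyMeasurable _ measurableSet_Ioi
    apply ContinuousOn.sub _ continuousOn_const
    apply Real.continuous_exp.comp_continuousOn
    apply ContinuousOn.mul continuousOn_const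
    apply ContinuousOn.rpow_const
    · apply ContinuousOn.log
      · exact (continuous_const.add continuous_id).continuousOn
      · intro u hu
        have hu' : (0:ℝ) < u := Set.mem_Ioi.1 hu
        exact ne_of_gt (by linarith)
    · intro u _
      exact Or.inr hδ'0.le
  have hbase : Integrable (fun u : ℝ => Real.exp (α * Real.log (1 + u) ^ δ))
      (F.restrict (Set.Ioi 0)) := by
    refine ⟨?_, ?_⟩
    · apply ContinuousOn.aestronglyMeasurable _ measurableSet_Ioi
      apply Real.continuous_exp.comp_continuousOn
      apply ContinuousOn.mul continuousOn_const
      apply ContinuousOn.rpow_const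
      · apply ContinuousOn.log
        · exact (continuous_const.add continuous_id).continuousOn
        · intro u hu
          have := Set.mem_Ioi.1 hu
          positivity
      · intro u _
        exact Or.inr hδ0.le
    · rw [hasFiniteIntegral_iff_ofReal (Eventually.of_forall fun u => Real.exp_nonneg _)]
      exact hF_int
  -- log(1+u) bound and integrability
  have hLbound : ∀ u : ℝ, 0 < u →
      Real.log (1 + u) ≤ C * Real.exp (α * Real.log (1 + u) ^ δ) := by
    intro u hu
    have hL0 : 0 ≤ Real.log (1 + u) := Real.log_nonneg (by linarith)
    have hg := hglob (Real.log (1 + u)) hL0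
    have he : 1 ≤ Real.exp (α' * Real.log (1 + u) ^ δ') :=
      Real.one_le_exp (by positivity)
    have h2 : (1 + Real.log (1 + u))
        ≤ (1 + Real.log (1 + u)) * Real.exp (α' * Real.log (1 + u) ^ δ') :=
      le_mul_of_one_le_right (by linarith) he
    have h3 : Real.exp ((α - c) * Real.log (1 + u) ^ δ)
        ≤ Real.exp (α * Real.log (1 + u) ^ δ) := by
      apply Real.exp_le_exp.2
      nlinarith [Real.rpow_nonneg hL0 δ]
    calc Real.log (1 + u) ≤ 1 + Real.log (1 + u) := by linarith
      _ ≤ C * Real.exp ((α - c) * Real.log (1 + u) ^ δ) := by linarith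
      _ ≤ C * Real.exp (α * Real.log (1 + u) ^ δ) :=
          mul_le_mul_of_nonneg_left h3 hC0.le
  have hlog_int : Integrable (fun u : ℝ => Real.log (1 + u)) (F.restrict (Set.Ioi 0)) := by
    apply Integrable.mono' (hbase.const_mul C)
    · apply ContinuousOn.aestronglyMeasurable _ measurableSet_Ioi
      apply ContinuousOn.log
      · exact (continuous_const.add continuous_id).continuousOn
      · intro u hu
        have := Set.mem_Ioi.1 hu
        positivity
    · rw [ae_restrict_iff' measurableSet_Ioi]
      filter_upwards with u hu
      have hu0 := Set.mem_Ioi.1 hu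
      rw [Real.norm_eq_abs, abs_of_nonneg (Real.log_nonneg (by linarith))]
      exact hLbound u hu0
  -- integrability of the increment
  have hIx_int : ∀ x : ℝ, Real.exp 1 ≤ x → Integrable
      (fun u : ℝ => Real.exp (α' * Real.log (x + u) ^ δ') - Real.exp (α' * Real.log x ^ δ'))
      (F.restrict (Set.Ioi 0)) := by
    intro x hx
    apply Integrable.mono'
      (hbase.const_mul (Real.exp (α' * Real.log x ^ δ') * (Real.exp (α' * Real.log 2 ^ δ') * C)))
    · exact hmble x (lt_of_lt_of_le (Real.exp_pos 1) hx)
    · rw [ae_restrict_iff' measurableSet_Ioi]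
      filter_upwards with u hu
      have hu0 := Set.mem_Ioi.1 hu
      obtain ⟨h1, _, h3, _⟩ :=
        aux_core δ α δ' α' C c hδ0 hα hδ'0 hδ'1 hα' hC1 hc0 hcα hglob hx hu0
      rw [Real.norm_eq_abs, abs_of_nonneg h1]
      exact le_trans h3 (le_of_eq (by ring))
  -- part (a)
  have hpartA : Tendsto
      (fun x : ℝ => Real.log x ^ (1 - δ') * (Real.exp (α' * Real.log x ^ δ'))⁻¹ *
        ∫ u in Set.Ioi (0:ℝ),
          (Real.exp (α' * Real.log (x + u) ^ δ') - Real.exp (α' * Real.log x ^ δ')) ∂F)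
      atTop (nhds 0) := by
    have h0 : Tendsto
        (fun x : ℝ => ∫ u in Set.Ioi (0:ℝ),
          (Real.log x ^ (1 - δ') * ((Real.exp (α' * Real.log x ^ δ'))⁻¹ *
            (Real.exp (α' * Real.log (x + u) ^ δ') - Real.exp (α' * Real.log x ^ δ')))) ∂F)
        atTop (nhds (∫ _ in Set.Ioi (0:ℝ), (0:ℝ) ∂F)) := by
      apply tendsto_integral_filter_of_dominated_convergence
        (bound := fun u : ℝ => α' * δ' * Real.exp (α' * δ') * Real.log (1 + u) +
          (Real.exp (α' * Real.log 2 ^ δ') * C) * Real.exp (α * Real.log (1 + u) ^ δ))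
      · filter_upwards [eventually_ge_atTop (Real.exp 1)] with x hx
        exact ((hmble x (lt_of_lt_of_le (Real.exp_pos 1) hx)).const_mul _).const_mul _
      · filter_upwards [eventually_ge_atTop (Real.exp 1)] with x hx
        rw [ae_restrict_iff' measurableSet_Ioi]
        filter_upwards with u hu
        have hu0 := Set.mem_Ioi.1 hu
        obtain ⟨h1, h2, _, _⟩ :=
          aux_core δ α δ' α' C c hδ0 hα hδ'0 hδ'1 hα' hC1 hc0 hcα hglob hx hu0
        rw [Real.norm_eq_abs, abs_of_nonneg]
        · exact h2
        · apply mul_nonneg (Real.rpow_nonneg (Real.log_nonneg ?_) _)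
            (mul_nonneg (inv_nonneg.2 (Real.exp_nonneg _)) h1)
          nlinarith [Real.add_one_le_exp (1:ℝ), lt_of_lt_of_le (Real.exp_pos 1) hx]
      · exact (hlog_int.const_mul _).add (hbase.const_mul _)
      · rw [ae_restrict_iff' measurableSet_Ioi]
        filter_upwards with u hu
        have hu0 := Set.mem_Ioi.1 hu
        apply squeeze_zero'
        · filter_upwards [eventually_ge_atTop (Real.exp 1)] with x hx
          obtain ⟨h1, _, _, _⟩ :=
            aux_core δ α δ' α' C c hδ0 hα hδ'0 hδ'1 hα' hC1 hc0 hcα hglob hx hu0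
          apply mul_nonneg (Real.rpow_nonneg (Real.log_nonneg ?_) _)
            (mul_nonneg (inv_nonneg.2 (Real.exp_nonneg _)) h1)
          nlinarith [Real.add_one_le_exp (1:ℝ), lt_of_lt_of_le (Real.exp_pos 1) hx]
        · filter_upwards [eventually_ge_atTop (Real.exp 1)] with x hx
          obtain ⟨_, _, _, h4⟩ :=
            aux_core δ α δ' α' C c hδ0 hα hδ'0 hδ'1 hα' hC1 hc0 hcα hglob hx hu0
          exact h4
        · exact Tendsto.div_atTop
            (tendsto_const_nhds (x := α' * δ' * Real.exp (α' * δ' * Real.log (1 + u)) * u))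
            tendsto_id
    rw [integral_zero] at h0
    refine h0.congr fun x => ?_
    rw [show (fun u : ℝ => Real.log x ^ (1 - δ') * ((Real.exp (α' * Real.log x ^ δ'))⁻¹ *
        (Real.exp (α' * Real.log (x + u) ^ δ') - Real.exp (α' * Real.log x ^ δ'))))
      = fun u : ℝ => (Real.log x ^ (1 - δ') * (Real.exp (α' * Real.log x ^ δ'))⁻¹) *
        (Real.exp (α' * Real.log (x + u) ^ δ') - Real.exp (α' * Real.log x ^ δ'))
      from funext fun u => by ring]
    rw [integral_const_mul]
  refine ⟨hpartA, ?_⟩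
  -- part (b)
  intro lam mu ε hlam hmu hε0 hε1
  -- the derivative identity
  have hderiv : ∀ x : ℝ, Real.exp 1 ≤ x →
      mu * x * deriv (fun y : ℝ => Real.exp (α' * Real.log y ^ δ')) x
        = mu * α' * δ' * Real.log x ^ (δ' - 1) * Real.exp (α' * Real.log x ^ δ') := by
    intro x hx
    have hx0 : 0 < x := lt_of_lt_of_le (Real.exp_pos 1) hx
    have hlog1 : 1 ≤ Real.log x := (Real.le_log_iff_exp_le hx0).2 hx
    have h1 : HasDerivAt Real.log x⁻¹ x := Real.hasDerivAt_log (ne_of_gt hx0)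
    have h2 : HasDerivAt (fun y : ℝ => Real.log y ^ δ')
        (x⁻¹ * δ' * Real.log x ^ (δ' - 1)) x :=
      h1.rpow_const (Or.inl (ne_of_gt (lt_of_lt_of_le one_pos hlog1)))
    have h3 := (h2.const_mul α').exp
    rw [h3.deriv]
    field_simp
  -- quantitative smallness from part (a)
  have hη : (0:ℝ) < ε * mu * α' * δ' / lam := by positivity
  have hev : ∀ᶠ x in atTop,
      Real.log x ^ (1 - δ') * (Real.exp (α' * Real.log x ^ δ'))⁻¹ *
        (∫ u in Set.Ioi (0:ℝ),
          (Real.exp (α' * Real.log (x + u) ^ δ') - Real.exp (α' * Real.log x ^ δ')) ∂F)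
        < ε * mu * α' * δ' / lam := hpartA.eventually_lt_const hη
  obtain ⟨x₀, hx₀⟩ := hev.exists_forall_of_atTop
  set x₁ : ℝ := max x₀ (Real.exp 1) with hx₁def
  have hx₁e : Real.exp 1 ≤ x₁ := le_max_right _ _
  -- uniform integral bound for the compact part
  have hIbound : ∀ x : ℝ, Real.exp 1 ≤ x →
      (∫ u in Set.Ioi (0:ℝ),
          (Real.exp (α' * Real.log (x + u) ^ δ') - Real.exp (α' * Real.log x ^ δ')) ∂F)
        ≤ (Real.exp (α' * Real.log x ^ δ') * (Real.exp (α' * Real.log 2 ^ δ') * C)) *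
            ∫ u in Set.Ioi (0:ℝ), Real.exp (α * Real.log (1 + u) ^ δ) ∂F := by
    intro x hx
    rw [← integral_const_mul]
    apply integral_mono_of_nonneg
    · filter_upwards [self_mem_ae_restrict (measurableSet_Ioi : MeasurableSet (Set.Ioi (0:ℝ)))]
        with u hu
      exact (aux_core δ α δ' α' C c hδ0 hα hδ'0 hδ'1 hα' hC1 hc0 hcα hglob hx
        (Set.mem_Ioi.1 hu)).1
    · exact hbase.const_mul _
    · filter_upwards [self_mem_ae_restrict (measurableSet_Ioi : MeasurableSet (Set.Ioi (0:ℝ)))]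
        with u hu
      have h3 := (aux_core δ α δ' α' C c hδ0 hα hδ'0 hδ'1 hα' hC1 hc0 hcα hglob hx
        (Set.mem_Ioi.1 hu)).2.2.1
      exact le_trans h3 (le_of_eq (by ring))
  set Mint : ℝ := ∫ u in Set.Ioi (0:ℝ), Real.exp (α * Real.log (1 + u) ^ δ) ∂F with hMdef
  have hM0 : 0 ≤ Mint := by
    apply integral_nonneg
    intro u
    exact Real.exp_nonneg _
  refine ⟨max (lam * ((Real.exp (α' * Real.log x₁ ^ δ') *
      (Real.exp (α' * Real.log 2 ^ δ') * C)) * Mint)) 0, fun x hx => ?_⟩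
  have hx0 : 0 < x := lt_of_lt_of_le (Real.exp_pos 1) hx
  have hlog1 : 1 ≤ Real.log x := (Real.le_log_iff_exp_le hx0).2 hx
  have hlogpos : 0 < Real.log x := lt_of_lt_of_le one_pos hlog1
  rw [hderiv x hx]
  have hDpos : 0 ≤ mu * α' * δ' * Real.log x ^ (δ' - 1) * Real.exp (α' * Real.log x ^ δ') := by
    positivity
  have hb0 : (0:ℝ) ≤ max (lam * ((Real.exp (α' * Real.log x₁ ^ δ') *
      (Real.exp (α' * Real.log 2 ^ δ') * C)) * Mint)) 0 := le_max_right _ _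
  rcases le_or_gt x₁ x with hxlarge | hxsmall
  · -- large x : use part (a)
    have hgx := hx₀ x (le_trans (le_max_left _ _) hxlarge)
    have hprod : Real.log x ^ (1 - δ') * Real.log x ^ (δ' - 1) = 1 := by
      rw [← Real.rpow_add hlogpos]
      norm_num
    have hmulpos : (0:ℝ) ≤ Real.log x ^ (δ' - 1) * Real.exp (α' * Real.log x ^ δ') := by
      positivity
    have h5 := mul_le_mul_of_nonneg_right hgx.le hmulpos
    have hL : (Real.log x ^ (1 - δ') * (Real.exp (α' * Real.log x ^ δ'))⁻¹ *
        (∫ u in Set.Ioi (0:ℝ),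
          (Real.exp (α' * Real.log (x + u) ^ δ') - Real.exp (α' * Real.log x ^ δ')) ∂F)) *
        (Real.log x ^ (δ' - 1) * Real.exp (α' * Real.log x ^ δ'))
        = ∫ u in Set.Ioi (0:ℝ),
          (Real.exp (α' * Real.log (x + u) ^ δ') - Real.exp (α' * Real.log x ^ δ')) ∂F := by
      rw [show (Real.log x ^ (1 - δ') * (Real.exp (α' * Real.log x ^ δ'))⁻¹ *
          (∫ u in Set.Ioi (0:ℝ),
            (Real.exp (α' * Real.log (x + u) ^ δ') - Real.exp (α' * Real.log x ^ δ')) ∂F)) *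
          (Real.log x ^ (δ' - 1) * Real.exp (α' * Real.log x ^ δ'))
        = (∫ u in Set.Ioi (0:ℝ),
            (Real.exp (α' * Real.log (x + u) ^ δ') - Real.exp (α' * Real.log x ^ δ')) ∂F) *
          (Real.log x ^ (1 - δ') * Real.log x ^ (δ' - 1)) *
          ((Real.exp (α' * Real.log x ^ δ'))⁻¹ * Real.exp (α' * Real.log x ^ δ')) from by ring]
      rw [hprod, inv_mul_cancel₀ (Real.exp_ne_zero _), mul_one, mul_one]
    rw [hL] at h5
    have hIle : lam * (∫ u in Set.Ioi (0:ℝ),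
        (Real.exp (α' * Real.log (x + u) ^ δ') - Real.exp (α' * Real.log x ^ δ')) ∂F)
        ≤ ε * (mu * α' * δ' * Real.log x ^ (δ' - 1) * Real.exp (α' * Real.log x ^ δ')) := by
      have h6 := mul_le_mul_of_nonneg_left h5 hlam.le
      calc lam * (∫ u in Set.Ioi (0:ℝ),
          (Real.exp (α' * Real.log (x + u) ^ δ') - Real.exp (α' * Real.log x ^ δ')) ∂F)
          ≤ lam * (ε * mu * α' * δ' / lam *
            (Real.log x ^ (δ' - 1) * Real.exp (α' * Real.log x ^ δ'))) := h6
        _ = ε * (mu * α' * δ' * Real.log x ^ (δ' - 1) * Real.exp (α' * Real.log x ^ δ')) := by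
            field_simp
    nlinarith [hDpos, hb0, hε0, hε1]
  · -- small x : use the uniform bound
    have hEx : Real.exp (α' * Real.log x ^ δ') ≤ Real.exp (α' * Real.log x₁ ^ δ') := by
      apply Real.exp_le_exp.2
      apply mul_le_mul_of_nonneg_left _ hα'.le
      apply Real.rpow_le_rpow hlogpos.le _ hδ'0.le
      exact Real.log_le_log hx0 hxsmall.le
    have hI := hIbound x hx
    have hKpos : (0:ℝ) ≤ (Real.exp (α' * Real.log 2 ^ δ') * C) * Mint := by positivity
    have hIle2 : lam * (∫ u in Set.Ioi (0:ℝ),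
        (Real.exp (α' * Real.log (x + u) ^ δ') - Real.exp (α' * Real.log x ^ δ')) ∂F)
        ≤ lam * ((Real.exp (α' * Real.log x₁ ^ δ') *
            (Real.exp (α' * Real.log 2 ^ δ') * C)) * Mint) := by
      apply mul_le_mul_of_nonneg_left _ hlam.le
      calc (∫ u in Set.Ioi (0:ℝ),
          (Real.exp (α' * Real.log (x + u) ^ δ') - Real.exp (α' * Real.log x ^ δ')) ∂F)
          ≤ (Real.exp (α' * Real.log x ^ δ') * (Real.exp (α' * Real.log 2 ^ δ') * C)) * Mint :=
            hI
        _ ≤ (Real.exp (α' * Real.log x₁ ^ δ') * (Real.exp (α' * Real.log 2 ^ δ') * C)) * Mint := by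
            have := mul_le_mul_of_nonneg_right hEx hKpos
            calc Real.exp (α' * Real.log x ^ δ') * (Real.exp (α' * Real.log 2 ^ δ') * C) * Mint
                = Real.exp (α' * Real.log x ^ δ') *
                  ((Real.exp (α' * Real.log 2 ^ δ') * C) * Mint) := by ring
              _ ≤ Real.exp (α' * Real.log x₁ ^ δ') *
                  ((Real.exp (α' * Real.log 2 ^ δ') * C) * Mint) := this
              _ = Real.exp (α' * Real.log x₁ ^ δ') *
                  (Real.exp (α' * Real.log 2 ^ δ') * C) * Mint := by ring
    have hble : lam * ((Real.exp (α' * Real.log x₁ ^ δ') *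
        (Real.exp (α' * Real.log 2 ^ δ') * C)) * Mint)
        ≤ max (lam * ((Real.exp (α' * Real.log x₁ ^ δ') *
            (Real.exp (α' * Real.log 2 ^ δ') * C)) * Mint)) 0 := le_max_left _ _
    nlinarith [hDpos, hε0, hε1]
end
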